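/- arXiv:2202.10334 — 10 statements merged into one kernel-verified Lean document; each statement's English description precedes it below -/
import Mathlib

section
/- For each pair of positive integers (p,q), the scattering polynomial φ^{(p,q)}(z) = Σ_{j=1}^{min(p,q)} C(p,j)·C(q-1,j-1)·z^{p-j}·(-conj(z))^{q-j}·(1-z·conj(z))^j satisfies the eigenvalue equation -(1-z·conj(z))·∂²φ/∂conj(z)∂z = pq·φ on the open unit disk. -/
set_option maxHeartbeats 1000000

open Complex Finset

/-- The coefficient of the `j`-th term of the scattering polynomial. -/
def scC (p q j : ℕ) : ℕ := p.choose j * (q - 1).choose (j - 1)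

/-- The basic monomial `z^(p-j) (-w)^(q-j) (1-zw)^j`. -/
noncomputable def scE (p q j : ℕ) (z w : ℂ) : ℂ :=
  z ^ (p - j) * (-w) ^ (q - j) * (1 - z * w) ^ j

/-- The `z`-derivative of the `j`-th term. -/
noncomputable def scG (p q j : ℕ) (z w : ℂ) : ℂ :=
  (scC p q j : ℂ) * ((↑(p - j) : ℂ) * z ^ (p - j - 1)) * (-w) ^ (q - j) * (1 - z * w) ^ j
    + (scC p q j : ℂ) * z ^ (p - j) * (-w) ^ (q - j) * ((j : ℂ) * (1 - z * w) ^ (j - 1) * -w)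

/-- The mixed second derivative of the `j`-th term. -/
noncomputable def scH (p q j : ℕ) (z w : ℂ) : ℂ :=
  ((scC p q j : ℂ) * ((↑(p - j) : ℂ) * z ^ (p - j - 1)) * ((↑(q - j) : ℂ) * (-w) ^ (q - j - 1) * -1) * (1 - z * w) ^ j
    + (scC p q j : ℂ) * ((↑(p - j) : ℂ) * z ^ (p - j - 1)) * (-w) ^ (q - j) * ((j : ℂ) * (1 - z * w) ^ (j - 1) * -z))
  + ((scC p q j : ℂ) * z ^ (p - j) * ((↑(q - j) : ℂ) * (-w) ^ (q - j - 1) * -1) * ((j : ℂ) * (1 - z * w) ^ (j - 1) * -w)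
    + (scC p q j : ℂ) * z ^ (p - j) * (-w) ^ (q - j)
        * (((j : ℂ) * ((↑(j - 1) : ℂ) * (1 - z * w) ^ (j - 1 - 1) * -z)) * -w + ((j : ℂ) * (1 - z * w) ^ (j - 1)) * -1))

/-- The telescoping auxiliary quantity. -/
noncomputable def scPsi (p q : ℕ) (z w : ℂ) (n : ℕ) : ℂ :=
  (scC p q (n + 1) : ℂ) * ((n : ℂ) + 1) * (n : ℂ) * (scE p q (n + 1) z w - scE p q n z w)

lemma sc_hasDerivAt_z (p q j : ℕ) (w z : ℂ) :
    HasDerivAt (fun z' : ℂ => (scC p q j : ℂ) * z' ^ (p - j) * (-w) ^ (q - j) * (1 - z' * w) ^ j)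
      (scG p q j z w) z := by
  have h1 : HasDerivAt (fun x : ℂ => 1 - x * w) (-w) z := by
    simpa using ((hasDerivAt_id z).mul_const w).const_sub 1
  have h2 := ((hasDerivAt_pow (p - j) z).const_mul ((scC p q j : ℂ))).mul_const ((-w) ^ (q - j))
  have h3 := h2.mul (h1.pow j)
  convert h3 using 1
  all_goals rfl

lemma sc_hasDerivAt_w (p q j : ℕ) (z w : ℂ) :
    HasDerivAt (fun w' : ℂ => scG p q j z w') (scH p q j z w) w := by
  have hu : HasDerivAt (fun w' : ℂ => 1 - z * w') (-z) w := by
    simpa using ((hasDerivAt_id w).const_mul z).const_sub 1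
  have hn : HasDerivAt (fun w' : ℂ => -w') (-1 : ℂ) w := (hasDerivAt_id w).neg
  have t1 := ((hn.pow (q - j)).const_mul ((scC p q j : ℂ) * ((↑(p - j) : ℂ) * z ^ (p - j - 1)))).mul (hu.pow j)
  have t2f := (hn.pow (q - j)).const_mul ((scC p q j : ℂ) * z ^ (p - j))
  have t2g := ((hu.pow (j - 1)).const_mul ((j : ℂ))).mul hn
  have t2 := t2f.mul t2g
  have htot := t1.add t2
  convert htot using 1
  all_goals rfl

lemma scH_expand (p q j : ℕ) (hj : 1 ≤ j) (hjp : j ≤ p) (hjq : j ≤ q) (z w : ℂ) :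
    -(1 - z * w) * scH p q j z w
      = (scC p q j : ℂ) *
          (((p : ℂ) - j) * ((q : ℂ) - j) * scE p q (j + 1) z w
            + (j : ℂ) * ((p : ℂ) + (q : ℂ) + 1 - 2 * (j : ℂ)) * scE p q j z w
            + (j : ℂ) * ((j : ℂ) - 1) * scE p q (j - 1) z w) := by
  obtain ⟨k, rfl⟩ := Nat.exists_eq_add_of_le' hj
  obtain ⟨a, rfl⟩ := Nat.exists_eq_add_of_le hjp
  obtain ⟨b, rfl⟩ := Nat.exists_eq_add_of_le hjq
  simp only [scH, scE]
  have e1 : k + 1 + a - (k + 1) = a := by omega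
  have e2 : k + 1 + b - (k + 1) = b := by omega
  have e3 : k + 1 + a - (k + 1) - 1 = a - 1 := by omega
  have e4 : k + 1 + b - (k + 1) - 1 = b - 1 := by omega
  have e5 : k + 1 - 1 = k := by omega
  have e6 : k + 1 - 1 - 1 = k - 1 := by omega
  have e7 : k + 1 + a - (k + 1 + 1) = a - 1 := by omega
  have e8 : k + 1 + b - (k + 1 + 1) = b - 1 := by omega
  have e9 : k + 1 + a - (k + 1 - 1) = a + 1 := by omega
  have e10 : k + 1 + b - (k + 1 - 1) = b + 1 := by omega
  simp only [e7, e8, e9, e10]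
  simp only [e3, e4]
  simp only [e1, e2]
  simp only [e6]
  simp only [e5]
  rcases a with _ | a <;> rcases b with _ | b <;> rcases k with _ | k <;>
    · simp only [Nat.zero_sub, Nat.add_sub_cancel, Nat.sub_self, pow_zero, Nat.cast_zero,
        Nat.cast_add, Nat.cast_one]
      push_cast
      ring

lemma scC_rec (p q j : ℕ) (hj : 1 ≤ j) (hjp : j ≤ p) (hjq : j ≤ q) :
    (scC p q j : ℂ) * ((p : ℂ) - (j : ℂ)) * ((q : ℂ) - (j : ℂ))
      = (scC p q (j + 1) : ℂ) * ((j : ℂ) + 1) * (j : ℂ) := by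
  have h1 : p.choose (j + 1) * (j + 1) = p.choose j * (p - j) := Nat.choose_succ_right_eq p j
  have h2 : (q - 1).choose j * j = (q - 1).choose (j - 1) * (q - j) := by
    have := Nat.choose_succ_right_eq (q - 1) (j - 1)
    have hj1 : j - 1 + 1 = j := by omega
    have hq1 : q - 1 - (j - 1) = q - j := by omega
    rwa [hj1, hq1] at this
  have key : scC p q j * ((p - j) * (q - j)) = scC p q (j + 1) * ((j + 1) * j) := by
    simp only [scC, Nat.add_sub_cancel]
    calc p.choose j * (q-1).choose (j-1) * ((p - j) * (q - j))
        = (p.choose (j+1) * (j+1)) * ((q-1).choose j * j) := by rw [h1, h2]; ring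
      _ = p.choose (j+1) * (q-1).choose j * ((j + 1) * j) := by ring
  have := congrArg (Nat.cast : ℕ → ℂ) key
  push_cast [Nat.cast_sub hjp, Nat.cast_sub hjq] at this
  linear_combination this

lemma scStep (p q j : ℕ) (hj : 1 ≤ j) (hjp : j ≤ p) (hjq : j ≤ q) (z w : ℂ) :
    -(1 - z * w) * scH p q j z w
      = (p : ℂ) * (q : ℂ) * ((scC p q j : ℂ) * scE p q j z w)
          + (scPsi p q z w j - scPsi p q z w (j - 1)) := by
  rw [scH_expand p q j hj hjp hjq z w]
  have hc := scC_rec p q j hj hjp hjq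
  obtain ⟨k, rfl⟩ := Nat.exists_eq_add_of_le' hj
  simp only [scPsi, Nat.add_sub_cancel]
  push_cast at hc ⊢
  linear_combination (scE p q (k + 1 + 1) z w - scE p q (k + 1) z w) * hc

lemma scPsi_min_eq_zero (p q : ℕ) (hp : 1 ≤ p) (hq : 1 ≤ q) (z w : ℂ) :
    scPsi p q z w (min p q) = 0 := by
  have h : scC p q (min p q + 1) = 0 := by
    rcases le_total p q with h | h
    · simp only [min_eq_left h, scC]
      rw [Nat.choose_eq_zero_of_lt (by omega)]
      ring
    · simp only [min_eq_right h, scC, Nat.add_sub_cancel]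
      rw [Nat.choose_eq_zero_of_lt (show q - 1 < q by omega)]
      ring
  simp [scPsi, h]

lemma sc_telescope (p q : ℕ) (hp : 1 ≤ p) (hq : 1 ≤ q) (z w : ℂ) :
    ∑ j ∈ Icc 1 (min p q), (scPsi p q z w j - scPsi p q z w (j - 1)) = 0 := by
  have : ∑ j ∈ Icc 1 (min p q), (scPsi p q z w j - scPsi p q z w (j - 1))
      = ∑ i ∈ range (min p q), (scPsi p q z w (i + 1) - scPsi p q z w i) := by
    rw [← Finset.Ico_add_one_right_eq_Icc, Finset.sum_Ico_eq_sum_range]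
    refine Finset.sum_congr (by rw [Nat.add_sub_cancel]) fun i _ => ?_
    rw [Nat.add_comm 1 i, Nat.add_sub_cancel]
  rw [this, Finset.sum_range_sub (scPsi p q z w) (min p q)]
  rw [scPsi_min_eq_zero p q hp hq]
  simp [scPsi]

lemma sc_algebra (p q : ℕ) (hp : 1 ≤ p) (hq : 1 ≤ q) (z w : ℂ) :
    -(1 - z * w) * ∑ j ∈ Icc 1 (min p q), scH p q j z w
      = (p : ℂ) * (q : ℂ) * ∑ j ∈ Icc 1 (min p q),
          (p.choose j : ℂ) * ((q - 1).choose (j - 1) : ℂ)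
            * z ^ (p - j) * (-w) ^ (q - j) * (1 - z * w) ^ j := by
  rw [Finset.mul_sum, Finset.mul_sum]
  have step : ∀ j ∈ Icc 1 (min p q),
      -(1 - z * w) * scH p q j z w
        = (p : ℂ) * (q : ℂ) * ((scC p q j : ℂ) * scE p q j z w)
            + (scPsi p q z w j - scPsi p q z w (j - 1)) := by
    intro j hj
    rw [Finset.mem_Icc] at hj
    exact scStep p q j hj.1 (le_trans hj.2 (min_le_left p q)) (le_trans hj.2 (min_le_right p q)) z w
  rw [Finset.sum_congr rfl step, Finset.sum_add_distrib, sc_telescope p q hp hq, add_zero]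
  refine Finset.sum_congr rfl fun j _ => ?_
  simp only [scC, scE]
  push_cast
  ring

/-- The scattering polynomial `φ^{(p,q)}`, viewed as a function `F(z,w)` of two independent
complex variables with `w` standing for `conj z`, satisfies the eigenvalue equation
`-(1 - z conj(z)) ∂²F/∂w∂z = pq · F` on the open unit disk (the Wirtinger derivatives of a
polynomial in `z` and `conj z` being the complex partial derivatives in the two slots). -/
theorem scattering_polynomial_eigenfunction (p q : ℕ) (hp : 1 ≤ p) (hq : 1 ≤ q)
    (F : ℂ → ℂ → ℂ)
    (hF : ∀ z w : ℂ, F z w = ∑ j ∈ Finset.Icc 1 (min p q),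
      (p.choose j : ℂ) * ((q - 1).choose (j - 1) : ℂ)
        * z ^ (p - j) * (-w) ^ (q - j) * (1 - z * w) ^ j)
    (z : ℂ) (hz : ‖z‖ < 1) :
    -(1 - z * (starRingEnd ℂ) z)
        * deriv (fun w : ℂ => deriv (fun z' : ℂ => F z' w) z) ((starRingEnd ℂ) z)
      = (p : ℂ) * (q : ℂ) * F z ((starRingEnd ℂ) z) := by
  have hinner : ∀ w : ℂ, deriv (fun z' => F z' w) z = ∑ j ∈ Icc 1 (min p q), scG p q j z w := by
    intro w
    have hfun : (fun z' => F z' w)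
        = fun z' => ∑ j ∈ Icc 1 (min p q),
            (scC p q j : ℂ) * z' ^ (p - j) * (-w) ^ (q - j) * (1 - z' * w) ^ j := by
      funext z'
      rw [hF]
      refine Finset.sum_congr rfl fun j _ => ?_
      simp only [scC]
      push_cast
      ring
    rw [hfun]
    exact (HasDerivAt.fun_sum fun j _ => sc_hasDerivAt_z p q j w z).deriv
  have houter : deriv (fun w => deriv (fun z' => F z' w) z) ((starRingEnd ℂ) z)
      = ∑ j ∈ Icc 1 (min p q), scH p q j z ((starRingEnd ℂ) z) := by
    have hfun : (fun w => deriv (fun z' => F z' w) z)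
        = fun w => ∑ j ∈ Icc 1 (min p q), scG p q j z w := funext hinner
    rw [hfun]
    exact (HasDerivAt.fun_sum fun j _ => sc_hasDerivAt_w p q j z ((starRingEnd ℂ) z)).deriv
  rw [houter, hF]
  exact sc_algebra p q hp hq z ((starRingEnd ℂ) z)
end

section
/- For positive integers p, q with z in the closed unit disk, the two expressions ((-1)^p / (q·(p+q-1)!))·(1-z·conj(z))·∂^{p+q}/(∂conj(z)^p ∂z^q)[(1-z·conj(z))^{p+q-1}] and Σ_{j=1}^{min(p,q)} C(p,j)·C(q-1,j-1)·z^{p-j}·(-conj(z))^{q-j}·(1-z·conj(z))^j are equal. -/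
open Complex Finset

open Polynomial in
private lemma sr_evalIter (f : Polynomial ℂ) (m : ℕ) :
    iteratedDeriv m (fun x => f.eval x) = fun x => (derivative^[m] f).eval x := by
  induction m with
  | zero => simp
  | succ m ih =>
    rw [iteratedDeriv_succ, ih, Function.iterate_succ_apply']
    funext x
    exact Polynomial.deriv _

open Polynomial in
private lemma sr_lemB (a : ℂ) (n k : ℕ) :
    derivative^[k] ((1 + C a * X) ^ n)
      = C ((n.descFactorial k : ℂ) * a ^ k) * (1 + C a * X) ^ (n - k) := by
  induction k with
  | zero => simp
  | succ k ih =>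
    rw [Function.iterate_succ_apply', ih]
    rcases le_or_gt n k with h | h
    · rw [(Nat.descFactorial_eq_zero_iff_lt.mpr (Nat.lt_succ_of_le h) :
          n.descFactorial (k + 1) = 0), Nat.sub_eq_zero_of_le h]
      simp only [pow_zero, mul_one, derivative_C, Nat.cast_zero, zero_mul, map_zero]
    · rw [derivative_C_mul, derivative_pow, derivative_add, derivative_one, derivative_C_mul,
        derivative_X, Nat.descFactorial_succ]
      have h1 : n - k - 1 = n - (k + 1) := by omega
      have h2 : ((n - k : ℕ) : ℂ) = ((n : ℂ) - k) := by
        push_cast [Nat.cast_sub h.le]; ring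
      push_cast
      rw [h1, h2]
      simp only [C_mul, C_pow, zero_add, mul_one]
      ring

set_option maxHeartbeats 1600000 in
private lemma sr_term_core (p q j : ℕ) (hp : 1 ≤ p) (hj1 : 1 ≤ j) (hjp : j ≤ p) (hjq : j ≤ q)
    (z u : ℂ) :
    ((-1 : ℂ) ^ p / ((q : ℂ) * ((p + q - 1).factorial : ℂ))) * (1 - z * u) *
      ((((p + q - 1).descFactorial q : ℕ) : ℂ) * (-1) ^ q *
        ((p.choose (p - j) : ℂ) * ((q.descFactorial j : ℂ) * u ^ (q - j) *
          (((p - 1).descFactorial (p - j) : ℂ) * (-z) ^ (p - j) * (1 - z * u) ^ (j - 1)))))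
    = (p.choose j : ℂ) * ((q - 1).choose (j - 1) : ℂ) * z ^ (p - j) * (-u) ^ (q - j)
        * (1 - z * u) ^ j := by
  have hq1 : 1 ≤ q := le_trans hj1 hjq
  have hfac : ∀ m : ℕ, ((m.factorial : ℕ) : ℂ) ≠ 0 := fun m => by
    exact_mod_cast m.factorial_ne_zero
  have hqc : (q : ℂ) ≠ 0 := Nat.cast_ne_zero.mpr (by omega)
  have f1 : (((p - 1).factorial : ℕ) : ℂ) * (((p + q - 1).descFactorial q : ℕ) : ℂ)
      = (((p + q - 1).factorial : ℕ) : ℂ) := by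
    have h := Nat.factorial_mul_descFactorial (show q ≤ p + q - 1 by omega)
    rw [show p + q - 1 - q = p - 1 by omega] at h
    exact_mod_cast h
  have f2 : (((q - j).factorial : ℕ) : ℂ) * ((q.descFactorial j : ℕ) : ℂ)
      = ((q.factorial : ℕ) : ℂ) := by exact_mod_cast Nat.factorial_mul_descFactorial hjq
  have f3 : (((j - 1).factorial : ℕ) : ℂ) * (((p - 1).descFactorial (p - j) : ℕ) : ℂ)
      = (((p - 1).factorial : ℕ) : ℂ) := by
    have h := Nat.factorial_mul_descFactorial (show p - j ≤ p - 1 by omega)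
    rw [show p - 1 - (p - j) = j - 1 by omega] at h
    exact_mod_cast h
  have f4 : ((p.choose (p - j) : ℕ) : ℂ) = ((p.choose j : ℕ) : ℂ) := by
    exact_mod_cast Nat.choose_symm hjp
  have f5 : (((q - 1).choose (j - 1) : ℕ) : ℂ) * (((j - 1).factorial : ℕ) : ℂ)
        * (((q - j).factorial : ℕ) : ℂ) = (((q - 1).factorial : ℕ) : ℂ) := by
    have h := Nat.choose_mul_factorial_mul_factorial (show j - 1 ≤ q - 1 by omega)
    rw [show q - 1 - (j - 1) = q - j by omega] at h
    exact_mod_cast h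
  have f6 : (q : ℂ) * (((q - 1).factorial : ℕ) : ℂ) = ((q.factorial : ℕ) : ℂ) := by
    exact_mod_cast Nat.mul_factorial_pred (show q ≠ 0 by omega)
  have hD : (((p + q - 1).descFactorial q : ℕ) : ℂ)
      = (((p + q - 1).factorial : ℕ) : ℂ) / (((p - 1).factorial : ℕ) : ℂ) := by
    rw [eq_div_iff (hfac _)]; linear_combination f1
  have hDQ : ((q.descFactorial j : ℕ) : ℂ)
      = ((q.factorial : ℕ) : ℂ) / (((q - j).factorial : ℕ) : ℂ) := by
    rw [eq_div_iff (hfac _)]; linear_combination f2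
  have hDP : (((p - 1).descFactorial (p - j) : ℕ) : ℂ)
      = (((p - 1).factorial : ℕ) : ℂ) / (((j - 1).factorial : ℕ) : ℂ) := by
    rw [eq_div_iff (hfac _)]; linear_combination f3
  have hC5 : (((q - 1).choose (j - 1) : ℕ) : ℂ)
      = (((q - 1).factorial : ℕ) : ℂ)
        / ((((j - 1).factorial : ℕ) : ℂ) * (((q - j).factorial : ℕ) : ℂ)) := by
    rw [eq_div_iff (mul_ne_zero (hfac _) (hfac _))]; linear_combination f5
  have hj2 : (-1 : ℂ) ^ j * (-1) ^ j = 1 := by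
    rw [← pow_add]; exact Even.neg_one_pow ⟨j, rfl⟩
  have hp2 : (-1 : ℂ) ^ p * (-1) ^ p = 1 := by
    rw [← pow_add]; exact Even.neg_one_pow ⟨p, rfl⟩
  have hpj : (-1 : ℂ) ^ (p - j) = (-1) ^ p * (-1) ^ j := by
    calc (-1 : ℂ) ^ (p - j) = (-1) ^ (p - j) * ((-1) ^ j * (-1) ^ j) := by rw [hj2, mul_one]
      _ = (-1) ^ (p - j + j) * (-1) ^ j := by rw [← mul_assoc, ← pow_add]
      _ = (-1) ^ p * (-1) ^ j := by rw [Nat.sub_add_cancel hjp]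
  have hqj : (-1 : ℂ) ^ (q - j) = (-1) ^ q * (-1) ^ j := by
    calc (-1 : ℂ) ^ (q - j) = (-1) ^ (q - j) * ((-1) ^ j * (-1) ^ j) := by rw [hj2, mul_one]
      _ = (-1) ^ (q - j + j) * (-1) ^ j := by rw [← mul_assoc, ← pow_add]
      _ = (-1) ^ q * (-1) ^ j := by rw [Nat.sub_add_cancel hjq]
  have hs1 : (-z) ^ (p - j) = (-1) ^ p * (-1) ^ j * z ^ (p - j) := by rw [neg_pow, hpj]
  have hs2 : (-u) ^ (q - j) = (-1 : ℂ) ^ p * (-1) ^ p * ((-1) ^ q * (-1) ^ j * u ^ (q - j)) := by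
    rw [neg_pow, hqj, hp2, one_mul]
  have hA : (1 - z * u) ^ j = (1 - z * u) ^ (j - 1) * (1 - z * u) := by
    conv_lhs => rw [show j = (j - 1) + 1 by omega]
    rw [pow_succ]
  have hn0 : (((p + q - 1).factorial : ℕ) : ℂ) ≠ 0 := hfac _
  have hp0 : (((p - 1).factorial : ℕ) : ℂ) ≠ 0 := hfac _
  have hq0 : (((q - j).factorial : ℕ) : ℂ) ≠ 0 := hfac _
  have hj0 : (((j - 1).factorial : ℕ) : ℂ) ≠ 0 := hfac _
  rw [hD, hDQ, hDP, f4, hC5, hA, hs1, hs2, ← f6]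
  field_simp

/-- The Rodrigues-type formula for scattering polynomials: for `p, q ≥ 1` and `z` in the closed
unit disk, `((-1)^p/(q (p+q-1)!)) (1-z z̄) ∂^{p+q}/(∂z̄^p ∂z^q) (1-z z̄)^{p+q-1}` equals the
explicit sum `Σ_{j=1}^{min(p,q)} C(p,j) C(q-1,j-1) z^{p-j} (-z̄)^{q-j} (1-z z̄)^j`, where the
Wirtinger derivatives are taken treating `z` and `z̄` as independent complex variables. -/
theorem scattering_polynomial_rodrigues (p q : ℕ) (hp : 1 ≤ p) (hq : 1 ≤ q)
    (z : ℂ) (hz : ‖z‖ ≤ 1) :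
    ((-1 : ℂ) ^ p / ((q : ℂ) * (Nat.factorial (p + q - 1) : ℂ)))
        * (1 - z * (starRingEnd ℂ) z)
        * iteratedDeriv p
            (fun w : ℂ => iteratedDeriv q (fun z' : ℂ => (1 - z' * w) ^ (p + q - 1)) z)
            ((starRingEnd ℂ) z)
      = ∑ j ∈ Finset.Icc 1 (min p q),
          (p.choose j : ℂ) * ((q - 1).choose (j - 1) : ℂ)
            * z ^ (p - j) * (-(starRingEnd ℂ) z) ^ (q - j)
            * (1 - z * (starRingEnd ℂ) z) ^ j := by
  classical
  set u : ℂ := (starRingEnd ℂ) z with hu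
  -- Step 1: inner iterated derivative
  have h1 : ∀ w : ℂ, iteratedDeriv q (fun z' : ℂ => (1 - z' * w) ^ (p + q - 1)) z
      = (((p + q - 1).descFactorial q : ℕ) : ℂ) * ((-w) ^ q * (1 - z * w) ^ (p - 1)) := by
    intro w
    have hf : (fun z' : ℂ => (1 - z' * w) ^ (p + q - 1))
        = fun z' : ℂ => Polynomial.eval z' ((1 + Polynomial.C (-w) * Polynomial.X) ^ (p + q - 1)) := by
      funext t
      simp only [Polynomial.eval_pow, Polynomial.eval_add, Polynomial.eval_one,
        Polynomial.eval_mul, Polynomial.eval_C, Polynomial.eval_X]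
      ring_nf
    rw [hf, sr_evalIter, sr_lemB, show p + q - 1 - q = p - 1 by omega]
    simp only [Polynomial.eval_mul, Polynomial.eval_C, Polynomial.eval_pow, Polynomial.eval_add,
      Polynomial.eval_one, Polynomial.eval_X]
    rw [neg_pow, neg_pow]
    ring_nf
  -- Step 2: outer function as a polynomial
  set d : ℂ := (((p + q - 1).descFactorial q : ℕ) : ℂ) with hd
  set P : Polynomial ℂ := Polynomial.C (d * (-1) ^ q)
      * (Polynomial.X ^ q * (1 + Polynomial.C (-z) * Polynomial.X) ^ (p - 1)) with hP
  have h2 : (fun w : ℂ => iteratedDeriv q (fun z' : ℂ => (1 - z' * w) ^ (p + q - 1)) z)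
      = fun w : ℂ => P.eval w := by
    funext w
    rw [h1 w]
    simp only [hP, Polynomial.eval_mul, Polynomial.eval_C, Polynomial.eval_pow,
      Polynomial.eval_add, Polynomial.eval_one, Polynomial.eval_X]
    rw [neg_pow]
    ring_nf
  -- Step 3: iterated derivative of P
  have h3 : Polynomial.derivative^[p] P
      = Polynomial.C (d * (-1) ^ q) * ∑ k ∈ Finset.range (p + 1),
          p.choose k • ((((q.descFactorial (p - k) : ℕ) : Polynomial ℂ)
              * Polynomial.X ^ (q - (p - k)))
            * (Polynomial.C ((((p - 1).descFactorial k : ℕ) : ℂ) * (-z) ^ k)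
              * (1 + Polynomial.C (-z) * Polynomial.X) ^ (p - 1 - k))) := by
    rw [hP, Polynomial.iterate_derivative_C_mul, Polynomial.iterate_derivative_mul]
    congr 1
    refine Finset.sum_congr rfl fun k _ => ?_
    rw [Polynomial.iterate_derivative_X_pow_eq_natCast_mul, sr_lemB]
  -- Step 4: the key evaluation
  have key : iteratedDeriv p
        (fun w : ℂ => iteratedDeriv q (fun z' : ℂ => (1 - z' * w) ^ (p + q - 1)) z) u
      = ∑ k ∈ Finset.range (p + 1),
          d * (-1) ^ q * ((p.choose k : ℂ) * ((q.descFactorial (p - k) : ℂ)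
            * u ^ (q - (p - k)) * (((p - 1).descFactorial k : ℂ) * (-z) ^ k
            * (1 - z * u) ^ (p - 1 - k)))) := by
    rw [h2, sr_evalIter]
    show Polynomial.eval u (Polynomial.derivative^[p] P) = _
    rw [h3, Polynomial.eval_mul, Polynomial.eval_finset_sum, Finset.mul_sum]
    refine Finset.sum_congr rfl fun k _ => ?_
    simp only [Polynomial.eval_smul, Polynomial.eval_mul, Polynomial.eval_pow,
      Polynomial.eval_add, Polynomial.eval_one, Polynomial.eval_X, Polynomial.eval_C,
      Polynomial.eval_natCast, smul_eq_mul, nsmul_eq_mul]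
    rw [neg_pow]
    ring_nf
  rw [key, Finset.mul_sum]
  rw [← Finset.sum_range_reflect]
  have hsub : Finset.Icc 1 (min p q) ⊆ Finset.range (p + 1) := by
    intro x hx
    simp only [Finset.mem_Icc, Finset.mem_range] at *
    omega
  rw [← Finset.sum_subset hsub ?vanish]
  · refine Finset.sum_congr rfl fun j hj => ?_
    simp only [Finset.mem_Icc] at hj
    obtain ⟨hj1, hj2⟩ := hj
    have hjp : j ≤ p := le_trans hj2 (min_le_left _ _)
    have hjq : j ≤ q := le_trans hj2 (min_le_right _ _)
    rw [show p + 1 - 1 - j = p - j by omega, show p - (p - j) = j by omega,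
      show p - 1 - (p - j) = j - 1 by omega]
    exact sr_term_core p q j hp hj1 hjp hjq z u
  case vanish =>
    intro k hk hk2
    simp only [Finset.mem_range] at hk
    simp only [Finset.mem_Icc, not_and_or, not_le] at hk2
    rw [show p + 1 - 1 - k = p - k by omega]
    rcases hk2 with h0 | hbig
    · -- k = 0
      have hk0 : k = 0 := by omega
      subst hk0
      rw [Nat.sub_zero, Nat.descFactorial_eq_zero_iff_lt.mpr (show p - 1 < p by omega)]
      push_cast
      ring
    · -- k > min p q
      have hkq : q < k := by omega
      rw [show p - (p - k) = k by omega]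
      rw [Nat.descFactorial_eq_zero_iff_lt.mpr hkq]
      push_cast
      ring
end

section
/- With Pₙ = M₀M₁⋯Mₙ and entries [[Ψₙ, Ψₙ*],[-Φₙ, Φₙ*]], for every n ≥ 1 and z with all coordinates nonzero one has Ψₙ*(z) = z_{ν(1)}⋯z_{ν(n)}·conj(Ψₙ(1/conj(z))) and Φₙ*(z) = z_{ν(1)}⋯z_{ν(n)}·conj(Φₙ(1/conj(z))), where 1/conj(z) = (1/conj(z₁),...,1/conj(z_d)). -/
open Complex Finset Matrix

private lemma mapE (f : ℂ →+* ℂ) (a b c d : ℂ) :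
    (!![a, b; c, d]).map f = !![f a, f b; f c, f d] := by
  ext i j
  fin_cases i <;> fin_cases j <;> simp [Matrix.map_apply]

private lemma sandwich (B : Matrix (Fin 2) (Fin 2) ℂ) :
    !![0, 1; 1, 0] * B * !![0, 1; 1, 0] = !![B 1 1, B 1 0; B 0 1, B 0 0] := by
  ext i j
  fin_cases i <;> fin_cases j <;>
    simp [Matrix.mul_apply, Fin.sum_univ_two, Matrix.vecMul, dotProduct]

private lemma dsandwich (B : Matrix (Fin 2) (Fin 2) ℂ) :
    !![1, 0; 0, -1] * B * !![0, 1; 1, 0] = !![B 0 1, B 0 0; -(B 1 1), -(B 1 0)] := by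
  ext i j
  fin_cases i <;> fin_cases j <;>
    simp [Matrix.mul_apply, Fin.sum_univ_two, Matrix.vecMul, dotProduct]

private lemma hSS : (!![0,1;1,0] : Matrix (Fin 2) (Fin 2) ℂ) * !![0,1;1,0] = 1 := by
  ext i j
  fin_cases i <;> fin_cases j <;> simp [Matrix.mul_apply, Fin.sum_univ_two]

/-- The reversal identities `Ψₙ*(z) = z_{ν₁}⋯z_{νₙ} conj(Ψₙ(1/conj z))` and
`Φₙ*(z) = z_{ν₁}⋯z_{νₙ} conj(Φₙ(1/conj z))` for the entries of `Pₙ(z) = M₀ M₁(z) ⋯ Mₙ(z)`. -/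
theorem star_identities (d : ℕ) (hd : 1 ≤ d)
    (r : ℕ → ℂ) (hr : ∀ n, ‖r n‖ < 1)
    (ν : ℕ → Fin d)
    (M : (Fin d → ℂ) → ℕ → Matrix (Fin 2) (Fin 2) ℂ)
    (hM0 : ∀ z, M z 0 = !![1, 1; -1, 1])
    (hM : ∀ z n, 1 ≤ n → M z n = !![z (ν n), r n * z (ν n); (starRingEnd ℂ) (r n), 1])
    (P : (Fin d → ℂ) → ℕ → Matrix (Fin 2) (Fin 2) ℂ)
    (hP : ∀ z n, P z n = ((List.range (n + 1)).map (M z)).prod)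
    (n : ℕ) (hn : 1 ≤ n) (z : Fin d → ℂ) (hz : ∀ j, z j ≠ 0) :
    P z n 0 1
        = (∏ k ∈ Finset.Icc 1 n, z (ν k))
            * (starRingEnd ℂ) (P (fun j => ((starRingEnd ℂ) (z j))⁻¹) n 0 0) ∧
    P z n 1 1
        = (∏ k ∈ Finset.Icc 1 n, z (ν k))
            * (starRingEnd ℂ) (-(P (fun j => ((starRingEnd ℂ) (z j))⁻¹) n 1 0)) := by
  set w : Fin d → ℂ := fun j => ((starRingEnd ℂ) (z j))⁻¹ with hw
  have hSS' : ∀ (X : Matrix (Fin 2) (Fin 2) ℂ),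
      (!![0,1;1,0] : Matrix (Fin 2) (Fin 2) ℂ) * (!![0,1;1,0] * X) = X := by
    intro X; rw [← mul_assoc, hSS, one_mul]
  have hPsucc : ∀ (u : Fin d → ℂ) m, P u (m + 1) = P u m * M u (m + 1) := by
    intro u m
    rw [hP, hP, List.range_succ, List.map_append, List.prod_append]
    simp
  have key : ∀ m, P z m = (∏ k ∈ Finset.Icc 1 m, z (ν k)) •
      (!![1,0;0,-1] * ((P w m).map (starRingEnd ℂ)) * !![0,1;1,0]) := by
    intro m
    induction m with
    | zero =>
        rw [hP, hP]
        simp only [List.range_succ, List.range_zero, List.map_nil, List.map_append,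
          List.map_cons, List.prod_append, List.prod_cons, List.prod_nil, one_mul, mul_one,
          hM0, Finset.Icc_self, Finset.Icc_eq_empty_of_lt (by norm_num : (1:ℕ) > 0)]
        rw [mapE, dsandwich]
        norm_num
    | succ m ih =>
        have hMstep : M z (m + 1)
            = z (ν (m + 1)) • (!![0,1;1,0] * ((M w (m + 1)).map (starRingEnd ℂ)) * !![0,1;1,0]) := by
          have hnz := hz (ν (m+1))
          rw [hM z (m+1) (by omega), hM w (m+1) (by omega), mapE, sandwich]
          ext i j
          fin_cases i <;> fin_cases j <;>
            (try simp [hw, map_inv₀, Matrix.smul_apply]) <;> (try field_simp [hnz]) <;>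
            (try ring)
        rw [hPsucc z m, hPsucc w m, ih, hMstep,
          Finset.prod_Icc_succ_top (by omega : 1 ≤ m + 1)]
        rw [Matrix.map_mul]
        rw [smul_mul_assoc, mul_smul_comm, smul_smul]
        congr 1
        simp only [mul_assoc, hSS']
  have hkn := key n
  rw [dsandwich] at hkn
  constructor
  · rw [hkn]; simp
  · rw [hkn]; simp
end

section
/- With Pₙ as above (all |r_j| < 1), the polynomial Φₙ* is zero-free on the closed unit polydisk: for all z ∈ ℂ^d with |z_j| ≤ 1 for each j, Φₙ*(z) ≠ 0. -/
open Complex Finset Matrix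

lemma key_abs_le (a b w ρ : ℂ) (hw : ‖w‖ ≤ 1) (hρ : ‖ρ‖ < 1)
    (hab : ‖a‖ ≤ ‖b‖) :
    ‖a * w + b * (starRingEnd ℂ) ρ‖ ≤ ‖a * (ρ * w) + b‖ := by
  have hsq : Complex.normSq (a * w + b * (starRingEnd ℂ) ρ) ≤
      Complex.normSq (a * (ρ * w) + b) := by
    rw [Complex.normSq_add, Complex.normSq_add]
    have hc : (a * w * (starRingEnd ℂ) (b * (starRingEnd ℂ) ρ)).re
        = (a * (ρ * w) * (starRingEnd ℂ) b).re := by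
      have : a * w * (starRingEnd ℂ) (b * (starRingEnd ℂ) ρ)
          = a * (ρ * w) * (starRingEnd ℂ) b := by
        simp only [RingHom.map_mul, Complex.conj_conj]
        ring
      rw [this]
    rw [hc]
    have h1 : Complex.normSq a ≤ Complex.normSq b := by
      rw [← Complex.sq_norm, ← Complex.sq_norm]
      exact pow_le_pow_left₀ (norm_nonneg a) hab 2
    have h2 : Complex.normSq w ≤ 1 := by
      rw [← Complex.sq_norm]
      nlinarith [norm_nonneg w]
    have h3 : Complex.normSq ρ ≤ 1 := by
      rw [← Complex.sq_norm]
      nlinarith [norm_nonneg ρ]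
    have h4 : 0 ≤ Complex.normSq a := Complex.normSq_nonneg a
    have h5 : 0 ≤ Complex.normSq w := Complex.normSq_nonneg w
    have h6 : 0 ≤ Complex.normSq ρ := Complex.normSq_nonneg ρ
    have h7 : 0 ≤ Complex.normSq b := Complex.normSq_nonneg b
    simp only [Complex.normSq_mul, Complex.normSq_conj]
    nlinarith [mul_nonneg (sub_nonneg.2 h3)
      (sub_nonneg.2 (le_trans (mul_le_of_le_one_right h4 h2) h1))]
  rw [Complex.norm_def, Complex.norm_def]
  exact Real.sqrt_le_sqrt hsq

/-- The polynomial `Φₙ* = (Pₙ)₂₂` is zero-free on the closed unit polydisk. -/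
theorem phi_star_zero_free (d : ℕ) (hd : 1 ≤ d)
    (r : ℕ → ℂ) (hr : ∀ n, ‖r n‖ < 1)
    (ν : ℕ → Fin d)
    (M : (Fin d → ℂ) → ℕ → Matrix (Fin 2) (Fin 2) ℂ)
    (hM0 : ∀ z, M z 0 = !![1, 1; -1, 1])
    (hM : ∀ z n, 1 ≤ n → M z n = !![z (ν n), r n * z (ν n); (starRingEnd ℂ) (r n), 1])
    (P : (Fin d → ℂ) → ℕ → Matrix (Fin 2) (Fin 2) ℂ)
    (hP : ∀ z n, P z n = ((List.range (n + 1)).map (M z)).prod)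
    (n : ℕ) (z : Fin d → ℂ) (hz : ∀ j, ‖z j‖ ≤ 1) :
    P z n 1 1 ≠ 0 := by
  suffices h : ∀ m, ‖P z m 1 0‖ ≤ ‖P z m 1 1‖ ∧ P z m 1 1 ≠ 0 by
    exact (h n).2
  intro m
  induction m with
  | zero =>
    have h0 : P z 0 = M z 0 := by rw [hP]; simp [List.range_succ]
    rw [h0, hM0]
    constructor <;> norm_num
  | succ m ih =>
    obtain ⟨hab, hb⟩ := ih
    have hstep : P z (m + 1) = P z m * M z (m + 1) := by
      rw [hP, hP, List.range_succ, List.map_append, List.prod_append]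
      simp
    set a := P z m 1 0 with ha
    set b := P z m 1 1 with hbdef
    set w := z (ν (m + 1)) with hwdef
    set ρ := r (m + 1) with hρdef
    have hMn : M z (m + 1) = !![w, ρ * w; (starRingEnd ℂ) ρ, 1] :=
      hM z (m + 1) (by omega)
    have e10 : P z (m + 1) 1 0 = a * w + b * (starRingEnd ℂ) ρ := by
      rw [hstep, hMn]
      simp [Matrix.mul_apply, Fin.sum_univ_two]
      rfl
    have e11 : P z (m + 1) 1 1 = a * (ρ * w) + b := by
      rw [hstep, hMn]
      simp [Matrix.mul_apply, Fin.sum_univ_two]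
      rfl
    have hw : ‖w‖ ≤ 1 := hz _
    have hρ : ‖ρ‖ < 1 := hr _
    constructor
    · rw [e10, e11]
      exact key_abs_le a b w ρ hw hρ hab
    · rw [e11]
      intro hzero
      have hbval : b = -(a * (ρ * w)) := by linear_combination hzero
      have habs : ‖b‖ = ‖a‖ * (‖ρ‖ * ‖w‖) := by
        rw [hbval, norm_neg]
        rw [show ‖a * (ρ * w)‖ = ‖a‖ * (‖ρ‖ * ‖w‖)
          from by rw [norm_mul, norm_mul]]
      have hbpos : 0 < ‖b‖ := norm_pos_iff.mpr hb
      have hρw : ‖ρ‖ * ‖w‖ < 1 :=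
        lt_of_le_of_lt (mul_le_of_le_one_right (norm_nonneg ρ) hw) hρ
      have step1 : ‖b‖ ≤ ‖b‖ * (‖ρ‖ * ‖w‖) :=
        le_trans habs.le (mul_le_mul_of_nonneg_right hab
          (mul_nonneg (norm_nonneg ρ) (norm_nonneg w)))
      have step2 : ‖b‖ * (‖ρ‖ * ‖w‖) < ‖b‖ := by
        nlinarith
      linarith
end

section
/- With Pₙ as above, the sum Ψₙ* + Φₙ* is zero-free on the closed unit polydisk for every n ≥ 0. -/
open Complex Finset Matrix

private lemma key_ineq (f g w ρ : ℂ) (hfg : ‖g‖ < ‖f‖)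
    (hw : ‖w‖ ≤ 1) (hρ : ‖ρ‖ < 1) :
    ‖w * g + (starRingEnd ℂ) ρ * f‖ < ‖f + ρ * w * g‖ := by
  have hcross : ((w * g) * (starRingEnd ℂ) ((starRingEnd ℂ) ρ * f)).re
      = (f * (starRingEnd ℂ) (ρ * w * g)).re := by
    have : (w * g) * (starRingEnd ℂ) ((starRingEnd ℂ) ρ * f)
        = (starRingEnd ℂ) (f * (starRingEnd ℂ) (ρ * w * g)) := by
      simp only [_root_.map_mul, Complex.conj_conj]
      ring
    rw [this, Complex.conj_re]
  have hid : Complex.normSq (f + ρ * w * g) - Complex.normSq (w * g + (starRingEnd ℂ) ρ * f)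
      = (1 - Complex.normSq ρ) * (Complex.normSq f - Complex.normSq w * Complex.normSq g) := by
    rw [Complex.normSq_add, Complex.normSq_add]
    simp only [Complex.normSq_mul, Complex.normSq_conj]
    rw [hcross]
    ring
  have hg2 : Complex.normSq g < Complex.normSq f := by
    have := Complex.sq_norm g; have := Complex.sq_norm f
    nlinarith [norm_nonneg g, norm_nonneg f]
  have hw2 : Complex.normSq w ≤ 1 := by
    have := Complex.sq_norm w
    nlinarith [norm_nonneg w]
  have hρ2 : Complex.normSq ρ < 1 := by
    have := Complex.sq_norm ρ
    nlinarith [norm_nonneg ρ]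
  have hpos : Complex.normSq (w * g + (starRingEnd ℂ) ρ * f)
      < Complex.normSq (f + ρ * w * g) := by
    have h1 : Complex.normSq w * Complex.normSq g ≤ Complex.normSq g := by
      nlinarith [Complex.normSq_nonneg g]
    have h2 : (0:ℝ) < Complex.normSq f - Complex.normSq w * Complex.normSq g := by linarith
    have h3 : (0:ℝ) < (1 - Complex.normSq ρ) * (Complex.normSq f - Complex.normSq w * Complex.normSq g) :=
      mul_pos (by linarith) h2
    linarith
  have := Complex.sq_norm (w * g + (starRingEnd ℂ) ρ * f)
  have := Complex.sq_norm (f + ρ * w * g)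
  nlinarith [norm_nonneg (w * g + (starRingEnd ℂ) ρ * f),
    norm_nonneg (f + ρ * w * g)]

/-- The sum `Ψₙ* + Φₙ* = (Pₙ)₁₂ + (Pₙ)₂₂` is zero-free on the closed unit polydisk. -/
theorem psi_star_plus_phi_star_zero_free (d : ℕ) (hd : 1 ≤ d)
    (r : ℕ → ℂ) (hr : ∀ n, ‖r n‖ < 1)
    (ν : ℕ → Fin d)
    (M : (Fin d → ℂ) → ℕ → Matrix (Fin 2) (Fin 2) ℂ)
    (hM0 : ∀ z, M z 0 = !![1, 1; -1, 1])
    (hM : ∀ z n, 1 ≤ n → M z n = !![z (ν n), r n * z (ν n); (starRingEnd ℂ) (r n), 1])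
    (P : (Fin d → ℂ) → ℕ → Matrix (Fin 2) (Fin 2) ℂ)
    (hP : ∀ z n, P z n = ((List.range (n + 1)).map (M z)).prod)
    (n : ℕ) (z : Fin d → ℂ) (hz : ∀ j, ‖z j‖ ≤ 1) :
    P z n 0 1 + P z n 1 1 ≠ 0 := by
  have main : ∀ m : ℕ, ‖P z m 0 0 + P z m 1 0‖
      < ‖P z m 0 1 + P z m 1 1‖ := by
    intro m
    induction m with
    | zero =>
        have h0 : P z 0 = !![1, 1; -1, 1] := by
          rw [hP, ← hM0 z]
          simp [List.range_succ]
        rw [h0]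
        norm_num
    | succ k ih =>
        have hstep : P z (k + 1) = P z k * M z (k + 1) := by
          rw [hP z (k + 1), hP z k, List.range_succ, List.map_append, List.prod_append]
          simp
        have hMk : M z (k + 1) = !![z (ν (k + 1)), r (k + 1) * z (ν (k + 1));
            (starRingEnd ℂ) (r (k + 1)), 1] := hM z (k + 1) (by omega)
        rw [hstep, hMk]
        set A := P z k
        set w := z (ν (k + 1))
        set ρ := r (k + 1)
        have e1 : (A * !![w, ρ * w; (starRingEnd ℂ) ρ, 1]) 0 0
            + (A * !![w, ρ * w; (starRingEnd ℂ) ρ, 1]) 1 0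
            = w * (A 0 0 + A 1 0) + (starRingEnd ℂ) ρ * (A 0 1 + A 1 1) := by
          simp [Matrix.mul_apply, Fin.sum_univ_two]
          ring
        have e2 : (A * !![w, ρ * w; (starRingEnd ℂ) ρ, 1]) 0 1
            + (A * !![w, ρ * w; (starRingEnd ℂ) ρ, 1]) 1 1
            = (A 0 1 + A 1 1) + ρ * w * (A 0 0 + A 1 0) := by
          simp [Matrix.mul_apply, Fin.sum_univ_two]
          ring
        rw [e1, e2]
        exact key_ineq _ _ _ _ ih (hz _) (hr _)
  intro h
  have h0 : ‖P z n 0 1 + P z n 1 1‖ = 0 := by rw [h]; simp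
  have := main n
  rw [h0] at this
  exact absurd this (not_lt.mpr (norm_nonneg _))
end

section
/- For the n-th convergent fₙ = (Ψₙ* - Φₙ*)/(Ψₙ* + Φₙ*) and z on the torus 𝕋^d, one has Re((1+fₙ(z))/(1-fₙ(z))) = ∏_{j=1}^n (1-|r_j|²) / |Φₙ*(z)|². -/
open Complex Finset Matrix

/-- On the torus, `Re((1+fₙ)/(1-fₙ)) = ∏_{j=1}^n (1-|r_j|²) / |Φₙ*|²`, where
`fₙ = (Ψₙ* - Φₙ*)/(Ψₙ* + Φₙ*)`. -/
theorem real_part_representation (d : ℕ) (hd : 1 ≤ d)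
    (r : ℕ → ℂ) (hr : ∀ n, ‖r n‖ < 1)
    (ν : ℕ → Fin d)
    (M : (Fin d → ℂ) → ℕ → Matrix (Fin 2) (Fin 2) ℂ)
    (hM0 : ∀ z, M z 0 = !![1, 1; -1, 1])
    (hM : ∀ z n, 1 ≤ n → M z n = !![z (ν n), r n * z (ν n); (starRingEnd ℂ) (r n), 1])
    (P : (Fin d → ℂ) → ℕ → Matrix (Fin 2) (Fin 2) ℂ)
    (hP : ∀ z n, P z n = ((List.range (n + 1)).map (M z)).prod)
    (n : ℕ) (z : Fin d → ℂ) (hz : ∀ j, ‖z j‖ = 1) :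
    ((1 + (P z n 0 1 - P z n 1 1) / (P z n 0 1 + P z n 1 1))
        / (1 - (P z n 0 1 - P z n 1 1) / (P z n 0 1 + P z n 1 1))).re
      = (∏ k ∈ Finset.Icc 1 n, (1 - (‖r k‖) ^ 2))
          / (‖P z n 1 1‖) ^ 2 := by
  set E : Matrix (Fin 2) (Fin 2) ℂ := !![0,1;1,0] with hE
  set J : Matrix (Fin 2) (Fin 2) ℂ := !![1,0;0,-1] with hJ
  have hstep : ∀ m : ℕ, 1 ≤ m →
      (M z m)ᴴ * J * (M z m) = (1 - (starRingEnd ℂ) (r m) * r m) • J := by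
    intro m hm
    have hw : (starRingEnd ℂ) (z (ν m)) * z (ν m) = 1 := by
      rw [mul_comm, Complex.mul_conj, Complex.normSq_eq_norm_sq, hz]
      norm_num
    rw [hM z m hm]
    ext i j
    fin_cases i <;> fin_cases j <;>
      simp [Matrix.mul_apply, Fin.sum_univ_two, Matrix.conjTranspose_apply, hJ, _root_.map_mul]
    · linear_combination hw
    · linear_combination (r m) * hw
    · linear_combination ((starRingEnd ℂ) (r m)) * hw
    · linear_combination ((starRingEnd ℂ) (r m) * r m) * hw
  have key : ∀ m : ℕ, (P z m)ᴴ * E * P z m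
      = (-2 * ∏ k ∈ Finset.Icc 1 m, (1 - (starRingEnd ℂ) (r k) * r k)) • J := by
    intro m
    induction m with
    | zero =>
      have hP0 : P z 0 = M z 0 := by rw [hP]; simp [List.range_succ]
      rw [hP0, hM0]
      ext i j
      fin_cases i <;> fin_cases j <;>
        simp [Matrix.mul_apply, Fin.sum_univ_two, Matrix.conjTranspose_apply, hJ, hE] <;>
        norm_num
    | succ m ih =>
      have hPs : P z (m + 1) = P z m * M z (m + 1) := by
        rw [hP, hP, List.range_succ, List.map_append, List.prod_append]
        simp
      have h1 : (P z (m+1))ᴴ * E * P z (m+1)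
          = (M z (m+1))ᴴ * ((P z m)ᴴ * E * P z m) * M z (m+1) := by
        rw [hPs, Matrix.conjTranspose_mul]
        noncomm_ring
      rw [h1, ih, Matrix.mul_smul, Matrix.smul_mul, hstep (m+1) (by omega), smul_smul,
        Finset.prod_Icc_succ_top (by omega : 1 ≤ m + 1)]
      congr 1
      ring
  have key2 : (starRingEnd ℂ) (P z n 0 1) * P z n 1 1 + (starRingEnd ℂ) (P z n 1 1) * P z n 0 1
      = 2 * ∏ k ∈ Finset.Icc 1 n, (1 - (starRingEnd ℂ) (r k) * r k) := by
    have h11 := congrFun (congrFun (key n) 1) 1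
    simp [Matrix.mul_apply, Fin.sum_univ_two, Matrix.conjTranspose_apply, hJ, hE,
      Matrix.smul_apply, smul_eq_mul] at h11
    linear_combination h11
  set Ψ : ℂ := P z n 0 1 with hΨdef
  set Φ : ℂ := P z n 1 1 with hΦdef
  set CR : ℝ := ∏ k ∈ Finset.Icc 1 n, (1 - (‖r k‖) ^ 2) with hCRdef
  have hCR : (CR : ℂ) = ∏ k ∈ Finset.Icc 1 n, (1 - (starRingEnd ℂ) (r k) * r k) := by
    rw [hCRdef]
    push_cast
    refine Finset.prod_congr rfl fun k _ => ?_
    rw [mul_comm, Complex.mul_conj, Complex.normSq_eq_norm_sq]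
    push_cast
    ring
  rw [← hCR] at key2
  have hCpos : 0 < CR := by
    refine Finset.prod_pos fun k _ => ?_
    nlinarith [hr k, norm_nonneg (r k)]
  have hΦ : Φ ≠ 0 := by
    intro h
    rw [h] at key2
    simp at key2
    linarith
  have hS : Ψ + Φ ≠ 0 := by
    intro h
    have hΨ : Ψ = -Φ := by linear_combination h
    rw [hΨ] at key2
    have : ((starRingEnd ℂ) (-Φ) * Φ + (starRingEnd ℂ) Φ * -Φ) = -2 * Complex.normSq Φ := by
      have hcc : (starRingEnd ℂ) Φ * Φ = Complex.normSq Φ := by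
        rw [mul_comm, Complex.mul_conj]
      rw [map_neg]
      linear_combination (-2 : ℂ) * hcc
    rw [this] at key2
    have := congrArg Complex.re key2
    simp at this
    have h2 := Complex.normSq_nonneg Φ
    linarith
  have ht : ((starRingEnd ℂ) Φ * Ψ).re = CR := by
    have := congrArg Complex.re key2
    simp only [Complex.add_re, Complex.mul_re, Complex.conj_re, Complex.conj_im,
      Complex.ofReal_re, Complex.mul_im, Complex.ofReal_im, Complex.re_ofNat,
      Complex.im_ofNat] at this ⊢
    ring_nf at this ⊢
    linarith
  have hratio : (1 + (Ψ - Φ) / (Ψ + Φ)) / (1 - (Ψ - Φ) / (Ψ + Φ)) = Ψ / Φ := by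
    have h1 : 1 - (Ψ - Φ) / (Ψ + Φ) = 2 * Φ / (Ψ + Φ) := by
      field_simp
      ring
    have h0 : 1 + (Ψ - Φ) / (Ψ + Φ) = 2 * Ψ / (Ψ + Φ) := by
      field_simp
      ring
    rw [h0, h1]
    field_simp
  rw [hratio, Complex.div_re]
  have hns : Complex.normSq Φ = ‖Φ‖ ^ 2 := Complex.normSq_eq_norm_sq Φ
  have hns0 : Complex.normSq Φ ≠ 0 := ne_of_gt (Complex.normSq_pos.mpr hΦ)
  simp only [Complex.mul_re, Complex.conj_re, Complex.conj_im] at ht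
  rw [← hns]
  field_simp
  nlinarith [ht]
end

section
/- For the n-th convergent fₙ = (Ψₙ* - Φₙ*)/(Ψₙ* + Φₙ*) and gₙ = 2·∏_{j=1}^n sqrt(1-|r_j|²) / (Ψₙ* + Φₙ*), one has 1 - |fₙ(z)|² = |gₙ(z)|² for every z ∈ 𝕋^d. -/
open Complex Finset Matrix

/-- On the torus, `1 - |fₙ|² = |gₙ|²` where `fₙ = (Ψₙ* - Φₙ*)/(Ψₙ* + Φₙ*)` and
`gₙ = 2 ∏_{j=1}^n √(1-|r_j|²) / (Ψₙ* + Φₙ*)`. -/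
theorem transmission_identity (d : ℕ) (hd : 1 ≤ d)
    (r : ℕ → ℂ) (hr : ∀ n, ‖r n‖ < 1)
    (ν : ℕ → Fin d)
    (M : (Fin d → ℂ) → ℕ → Matrix (Fin 2) (Fin 2) ℂ)
    (hM0 : ∀ z, M z 0 = !![1, 1; -1, 1])
    (hM : ∀ z n, 1 ≤ n → M z n = !![z (ν n), r n * z (ν n); (starRingEnd ℂ) (r n), 1])
    (P : (Fin d → ℂ) → ℕ → Matrix (Fin 2) (Fin 2) ℂ)
    (hP : ∀ z n, P z n = ((List.range (n + 1)).map (M z)).prod)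
    (n : ℕ) (hn : 1 ≤ n) (z : Fin d → ℂ) (hz : ∀ j, ‖z j‖ = 1) :
    1 - (‖(P z n 0 1 - P z n 1 1) / (P z n 0 1 + P z n 1 1)‖) ^ 2
      = (‖
          ((2 * ((∏ k ∈ Finset.Icc 1 n, Real.sqrt (1 - (‖r k‖) ^ 2) : ℝ) : ℂ))
            / (P z n 0 1 + P z n 1 1))‖) ^ 2 := by
  have hzu : ∀ j, z j * (starRingEnd ℂ) (z j) = 1 := by
    intro j
    rw [Complex.mul_conj, Complex.normSq_eq_norm_sq, hz j]
    norm_num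
  -- the key inductive invariant
  have key : ∀ m,
      P z m 0 1 = (∏ j ∈ Finset.Icc 1 m, z (ν j)) * (starRingEnd ℂ) (P z m 0 0) ∧
      P z m 1 1 = -((∏ j ∈ Finset.Icc 1 m, z (ν j)) * (starRingEnd ℂ) (P z m 1 0)) ∧
      (P z m 0 1 * (starRingEnd ℂ) (P z m 1 1)).re
        = ∏ k ∈ Finset.Icc 1 m, (1 - (‖r k‖) ^ 2) := by
    intro m
    induction m with
    | zero =>
      have h0 : P z 0 = M z 0 := by
        rw [hP]; simp [List.range_succ]
      rw [h0, hM0]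
      norm_num [Finset.Icc_eq_empty_of_lt]
    | succ m ih =>
      obtain ⟨ih1, ih2, ih3⟩ := ih
      set w : ℂ := ∏ j ∈ Finset.Icc 1 m, z (ν j) with hwdef
      have hw : w * (starRingEnd ℂ) w = 1 := by
        rw [hwdef, map_prod, ← Finset.prod_mul_distrib]
        exact Finset.prod_eq_one fun j _ => hzu (ν j)
      set ζ : ℂ := z (ν (m + 1)) with hζdef
      have hζ : ζ * (starRingEnd ℂ) ζ = 1 := hzu (ν (m + 1))
      set ρ : ℂ := r (m + 1) with hρdef
      have hstep : P z (m + 1) = P z m * M z (m + 1) := by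
        rw [hP, hP, List.range_succ, List.map_append, List.prod_append]
        simp
      have hMv : M z (m + 1) = !![ζ, ρ * ζ; (starRingEnd ℂ) ρ, 1] :=
        hM z (m + 1) (Nat.le_add_left 1 m)
      have e00 : P z (m + 1) 0 0 = P z m 0 0 * ζ + P z m 0 1 * (starRingEnd ℂ) ρ := by
        rw [hstep, hMv, Matrix.mul_apply, Fin.sum_univ_two]; simp
      have e01 : P z (m + 1) 0 1 = P z m 0 0 * (ρ * ζ) + P z m 0 1 := by
        rw [hstep, hMv, Matrix.mul_apply, Fin.sum_univ_two]; simp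
      have e10 : P z (m + 1) 1 0 = P z m 1 0 * ζ + P z m 1 1 * (starRingEnd ℂ) ρ := by
        rw [hstep, hMv, Matrix.mul_apply, Fin.sum_univ_two]; simp
      have e11 : P z (m + 1) 1 1 = P z m 1 0 * (ρ * ζ) + P z m 1 1 := by
        rw [hstep, hMv, Matrix.mul_apply, Fin.sum_univ_two]; simp
      have hwprod : ∏ j ∈ Finset.Icc 1 (m + 1), z (ν j) = w * ζ := by
        rw [Finset.prod_Icc_succ_top (Nat.le_add_left 1 m), ← hwdef, ← hζdef]
      constructor
      · rw [e01, e00, hwprod, ih1]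
        simp only [map_add, _root_.map_mul, Complex.conj_conj]
        linear_combination (-(w * (starRingEnd ℂ) (P z m 0 0))) * hζ
          - (ρ * ζ * P z m 0 0) * hw
      constructor
      · rw [e11, e10, hwprod, ih2]
        simp only [map_add, _root_.map_mul, map_neg, Complex.conj_conj]
        linear_combination (w * (starRingEnd ℂ) (P z m 1 0)) * hζ
          - (ρ * ζ * P z m 1 0) * hw
      · -- the real-part computation
        have hC : P z (m + 1) 0 1 * (starRingEnd ℂ) (P z (m + 1) 1 1)
              + (starRingEnd ℂ) (P z (m + 1) 0 1 * (starRingEnd ℂ) (P z (m + 1) 1 1))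
            = (1 - ρ * (starRingEnd ℂ) ρ) *
              (P z m 0 1 * (starRingEnd ℂ) (P z m 1 1)
                + (starRingEnd ℂ) (P z m 0 1 * (starRingEnd ℂ) (P z m 1 1))) := by
          rw [e01, e11, ih1, ih2]
          simp only [map_add, _root_.map_mul, map_neg, Complex.conj_conj]
          linear_combination (ρ * (starRingEnd ℂ) ρ *
              (P z m 0 0 * (starRingEnd ℂ) (P z m 1 0)
                + (starRingEnd ℂ) (P z m 0 0) * P z m 1 0)) * hζ
            - (ρ * (starRingEnd ℂ) ρ *
              (P z m 0 0 * (starRingEnd ℂ) (P z m 1 0)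
                + (starRingEnd ℂ) (P z m 0 0) * P z m 1 0)) * hw
        have hre := congrArg Complex.re hC
        rw [Complex.add_re, Complex.conj_re] at hre
        have hρr : (1 : ℂ) - ρ * (starRingEnd ℂ) ρ
            = ((1 - (‖ρ‖) ^ 2 : ℝ) : ℂ) := by
          rw [Complex.mul_conj, Complex.normSq_eq_norm_sq]
          push_cast
          ring
        rw [hρr, Complex.re_ofReal_mul, Complex.add_re, Complex.conj_re] at hre
        rw [Finset.prod_Icc_succ_top (Nat.le_add_left 1 m), ← ih3, ← hρdef]
        linarith
  obtain ⟨_, _, hre⟩ := key n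
  set a : ℂ := P z n 0 1
  set b : ℂ := P z n 1 1
  set p : ℝ := ∏ k ∈ Finset.Icc 1 n, (1 - (‖r k‖) ^ 2) with hpdef
  have hfac : ∀ k, (0 : ℝ) < 1 - (‖r k‖) ^ 2 := by
    intro k
    have : (‖r k‖) ^ 2 < 1 := by
      have := hr k
      nlinarith [norm_nonneg (r k)]
    linarith
  have hp : 0 < p := Finset.prod_pos fun k _ => hfac k
  have hab : a + b ≠ 0 := by
    intro h
    have hb : b = -a := by linear_combination h
    rw [hb] at hre
    simp only [map_neg, mul_neg, Complex.neg_re, Complex.mul_conj] at hre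
    have h1 : (0:ℝ) ≤ Complex.normSq a := Complex.normSq_nonneg a
    rw [Complex.ofReal_re] at hre
    linarith
  -- square of the sqrt product
  have hsq : (∏ k ∈ Finset.Icc 1 n, Real.sqrt (1 - (‖r k‖) ^ 2)) ^ 2 = p := by
    rw [← Finset.prod_pow, hpdef]
    exact Finset.prod_congr rfl fun k _ => Real.sq_sqrt (le_of_lt (hfac k))
  have habs : ∀ x : ℂ, (‖x‖) ^ 2 = Complex.normSq x := fun x =>
    (Complex.normSq_eq_norm_sq x).symm
  have hkey4 : Complex.normSq (a + b) - Complex.normSq (a - b) = 4 * p := by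
    rw [← hre]
    simp only [Complex.normSq_apply, Complex.add_re, Complex.add_im, Complex.sub_re,
      Complex.sub_im, Complex.mul_re, Complex.mul_im, Complex.conj_re, Complex.conj_im]
    ring
  have hden : Complex.normSq (a + b) ≠ 0 := fun h => hab (Complex.normSq_eq_zero.mp h)
  rw [norm_div, norm_div, div_pow, div_pow, habs, habs, habs]
  have h2 : Complex.normSq (2 * ((∏ k ∈ Finset.Icc 1 n,
      Real.sqrt (1 - (‖r k‖) ^ 2) : ℝ) : ℂ)) = 4 * p := by
    have : (2 * ((∏ k ∈ Finset.Icc 1 n, Real.sqrt (1 - (‖r k‖) ^ 2) : ℝ) : ℂ))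
        = (((2 * ∏ k ∈ Finset.Icc 1 n, Real.sqrt (1 - (‖r k‖) ^ 2) : ℝ)) : ℂ) := by
      push_cast; ring
    rw [this, Complex.normSq_ofReal]
    nlinarith [hsq]
  rw [h2]
  field_simp
  linarith [hkey4, mul_pos hp (lt_of_le_of_ne (Complex.normSq_nonneg (a+b)) (Ne.symm hden))]
end

section
/- Let h : 𝔻 → closure(𝔻) be holomorphic with h(0) = 0. Then the mean over the unit circle of log|1 + h°| equals 0, where h° denotes the radial boundary limit; equivalently, for h bounded holomorphic on the disk with h(0)=0, the function 1+h is outer and ∫_𝕋 log|1+h°| dτ = log|1+h(0)| = 0. -/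
open Complex Real MeasureTheory Filter

lemma meanval {f : ℂ → ℂ} {s : ℝ} (hs : 0 < s)
    (hf : DifferentiableOn ℂ f (Metric.closedBall 0 s)) :
    ∫ θ in Set.Ioc (0:ℝ) (2*π), f ((s:ℂ) * Complex.exp ((θ:ℂ) * Complex.I))
      = (2*π) * f 0 := by
  have h0 : (0:ℂ) ∈ Metric.ball (0:ℂ) s := by simpa using hs
  have key := hf.circleIntegral_sub_inv_smul h0
  rw [circleIntegral] at key
  simp only [sub_zero, deriv_circleMap, smul_eq_mul] at key
  have hcong : ∀ θ : ℝ, circleMap 0 s θ * Complex.I * ((circleMap 0 s θ)⁻¹ * f (circleMap 0 s θ))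
      = Complex.I * f (circleMap 0 s θ) := by
    intro θ
    have hne : circleMap 0 s θ ≠ 0 := by
      simp [circleMap_zero, Complex.exp_ne_zero, hs.ne', Complex.ofReal_eq_zero]
    field_simp
  simp only [hcong] at key
  rw [intervalIntegral.integral_const_mul] at key
  have key2 : (∫ θ in (0:ℝ)..(2*π), f (circleMap 0 s θ)) = (2*π) * f 0 := by
    have hI : (Complex.I : ℂ) ≠ 0 := Complex.I_ne_zero
    apply mul_left_cancel₀ hI
    rw [key]
    ring
  rw [intervalIntegral.integral_of_le (by positivity)] at key2
  rw [← key2]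
  apply setIntegral_congr_fun measurableSet_Ioc
  intro θ _
  simp [circleMap]

lemma memball {s : ℝ} (hs0 : 0 ≤ s) (hs1 : s < 1) (θ : ℝ) :
    (s:ℂ) * Complex.exp ((θ:ℂ) * Complex.I) ∈ Metric.ball (0:ℂ) 1 := by
  rw [mem_ball_zero_iff]
  have : ‖(s:ℂ) * Complex.exp ((θ:ℂ) * Complex.I)‖
      = ‖(s:ℂ) * Complex.exp ((θ:ℂ) * Complex.I)‖ := rfl
  rw [this, norm_mul, Complex.norm_exp_ofReal_mul_I, Complex.norm_of_nonneg hs0]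
  simpa using hs1

lemma key_delta (h : ℂ → ℂ)
    (hh : DifferentiableOn ℂ h (Metric.ball (0 : ℂ) 1))
    (hb : ∀ z ∈ Metric.ball (0 : ℂ) 1, ‖h z‖ ≤ 1)
    (h0 : h 0 = 0)
    (hstar : ℝ → ℂ)
    (hlim : ∀ᵐ (θ : ℝ) ∂(volume.restrict (Set.Ioc (0 : ℝ) (2 * π))),
      Tendsto (fun s : ℝ => h ((s : ℂ) * Complex.exp ((θ : ℝ) * Complex.I)))
        (nhdsWithin 1 (Set.Iio 1)) (nhds (hstar θ)))
    (habs : ∀ᵐ (θ : ℝ) ∂(volume.restrict (Set.Ioc (0 : ℝ) (2 * π))),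
      ‖hstar θ‖ ≤ 1)
    {δ : ℝ} (hδ0 : 0 < δ) (hδ1 : δ ≤ 1) :
    ∫ θ in Set.Ioc (0:ℝ) (2*π), Real.log (‖1 + (δ:ℂ) + hstar θ‖)
      = (2*π) * Real.log (1+δ) := by
  have hπ := Real.pi_pos
  -- the radii sequence
  set sn : ℕ → ℝ := fun n => 1 - 1/(n+2) with hsn
  have hs0 : ∀ n, 0 < sn n := by
    intro n
    have h2 : (1:ℝ)/(n+2) ≤ 1/2 := by
      apply div_le_div_of_nonneg_left (by norm_num) (by norm_num)
      · push_cast; linarith [Nat.cast_nonneg (α := ℝ) n]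
    simp only [hsn]; linarith
  have hs1 : ∀ n, sn n < 1 := by
    intro n
    have : (0:ℝ) < 1/(n+2) := by positivity
    simp only [hsn]; linarith
  have hstend : Tendsto sn atTop (nhdsWithin 1 (Set.Iio 1)) := by
    rw [tendsto_nhdsWithin_iff]
    constructor
    · have h2 : Tendsto (fun n : ℕ => ((n:ℝ)+2)) atTop atTop :=
        tendsto_atTop_add_const_right _ 2 tendsto_natCast_atTop_atTop
      have h3 : Tendsto (fun n : ℕ => 1/((n:ℝ)+2)) atTop (nhds 0) := by
        simpa [one_div, Pi.inv_def] using h2.inv_tendsto_atTop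
      have h4 : Tendsto (fun n : ℕ => 1 - 1/((n:ℝ)+2)) atTop (nhds 1) := by
        simpa using (tendsto_const_nhds (x := (1:ℝ)) (f := atTop (α := ℕ))).sub h3
      exact h4
    · exact Filter.Eventually.of_forall fun n => hs1 n
  -- positivity of the real part
  have hre : ∀ z ∈ Metric.ball (0:ℂ) 1, δ ≤ (1 + (δ:ℂ) + h z).re := by
    intro z hz
    have h1 : |(h z).re| ≤ 1 := le_trans (Complex.abs_re_le_norm _) (hb z hz)
    have h2 := (abs_le.mp h1).1
    simp only [Complex.add_re, Complex.one_re, Complex.ofReal_re]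
    linarith
  set F : ℂ → ℂ := fun z => Complex.log (1 + (δ:ℂ) + h z) with hF
  have hFdiff : DifferentiableOn ℂ F (Metric.ball (0:ℂ) 1) := by
    intro z hz
    have hslit : (1 + (δ:ℂ) + h z) ∈ Complex.slitPlane :=
      Or.inl (lt_of_lt_of_le hδ0 (hre z hz))
    exact (Complex.differentiableAt_log hslit).comp_differentiableWithinAt z
      ((hh z hz).const_add _)
  -- mean value for each n
  have hγcont : ∀ n, Continuous fun θ : ℝ => (sn n : ℂ) * Complex.exp ((θ:ℂ) * Complex.I) := by
    intro n
    exact continuous_const.mul (Complex.continuous_exp.comp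
      (Complex.continuous_ofReal.mul continuous_const))
  have hcont : ∀ n, Continuous fun θ : ℝ => F ((sn n : ℂ) * Complex.exp ((θ:ℂ) * Complex.I)) := by
    intro n
    exact (hFdiff.continuousOn).comp_continuous (hγcont n)
      (fun θ => memball (hs0 n).le (hs1 n) θ)
  have hmv : ∀ n, ∫ θ in Set.Ioc (0:ℝ) (2*π),
      Real.log (‖1 + (δ:ℂ) + h ((sn n : ℂ) * Complex.exp ((θ:ℂ) * Complex.I))‖)
        = (2*π) * Real.log (1+δ) := by
    intro n
    have hmv0 := meanval (hs0 n) (hFdiff.mono (Metric.closedBall_subset_ball (hs1 n)))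
    have hint : IntegrableOn (fun θ : ℝ => F ((sn n : ℂ) * Complex.exp ((θ:ℂ) * Complex.I)))
        (Set.Ioc (0:ℝ) (2*π)) volume := (hcont n).integrableOn_Ioc
    have hre2 := integral_re hint
    rw [hmv0] at hre2
    have hF0 : (2*π : ℂ) * F 0 = ((2*π*Real.log (1+δ) : ℝ) : ℂ) := by
      simp only [hF, h0, add_zero]
      have : (1 : ℂ) + (δ:ℂ) = ((1+δ : ℝ) : ℂ) := by push_cast; ring
      rw [this, ← Complex.ofReal_log (by linarith)]
      push_cast
      ring
    rw [hF0] at hre2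
    simp only [RCLike.re_to_complex, Complex.ofReal_re] at hre2
    rw [← hre2]
    apply setIntegral_congr_fun measurableSet_Ioc
    intro θ _
    simp only [hF, Complex.log_re]
  -- dominated convergence in n
  have hlog3 : (0:ℝ) ≤ Real.log 3 := Real.log_nonneg (by norm_num)
  set C : ℝ := max (-Real.log δ) (Real.log 3) with hC
  have habs1δ : ‖1 + (δ:ℂ)‖ = 1 + δ := by
    have : (1:ℂ) + (δ:ℂ) = ((1+δ : ℝ) : ℂ) := by push_cast; ring
    rw [this, Complex.norm_of_nonneg (by linarith)]
  have hbound : ∀ n, ∀ᵐ (θ : ℝ) ∂(volume.restrict (Set.Ioc (0:ℝ) (2*π))),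
      ‖Real.log (‖1 + (δ:ℂ) + h ((sn n : ℂ) * Complex.exp ((θ:ℂ) * Complex.I))‖)‖
        ≤ C := by
    intro n
    refine Filter.Eventually.of_forall fun θ => ?_
    have hz := memball (hs0 n).le (hs1 n) θ
    set w := 1 + (δ:ℂ) + h ((sn n : ℂ) * Complex.exp ((θ:ℂ) * Complex.I)) with hw
    have h1 : δ ≤ ‖w‖ := le_trans (hre _ hz) (Complex.re_le_norm w)
    have h2 : ‖w‖ ≤ 3 := by
      calc ‖w‖ ≤ ‖1 + (δ:ℂ)‖ + ‖h _‖ :=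
            norm_add_le _ _
        _ ≤ (1 + δ) + 1 := by rw [habs1δ]; exact add_le_add_right (hb _ hz) _
        _ ≤ 3 := by linarith
    rw [Real.norm_eq_abs, abs_le]
    constructor
    · have hl : Real.log δ ≤ Real.log (‖w‖) := Real.log_le_log hδ0 h1
      have : -C ≤ Real.log δ := by
        have := le_max_left (-Real.log δ) (Real.log 3)
        linarith
      linarith
    · exact le_trans (Real.log_le_log (lt_of_lt_of_le hδ0 h1) h2)
        (le_max_right _ _)
  have hmeasn : ∀ n, AEStronglyMeasurable
      (fun θ : ℝ => Real.log (‖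
        1 + (δ:ℂ) + h ((sn n : ℂ) * Complex.exp ((θ:ℂ) * Complex.I))‖))
      (volume.restrict (Set.Ioc (0:ℝ) (2*π))) := by
    intro n
    have heq : (fun θ : ℝ => Real.log (‖
        1 + (δ:ℂ) + h ((sn n : ℂ) * Complex.exp ((θ:ℂ) * Complex.I))‖))
        = fun θ : ℝ => (F ((sn n : ℂ) * Complex.exp ((θ:ℂ) * Complex.I))).re := by
      funext θ; simp [hF, Complex.log_re]
    rw [heq]
    exact (Complex.continuous_re.comp (hcont n)).aestronglyMeasurable
  have hptlim : ∀ᵐ (θ : ℝ) ∂(volume.restrict (Set.Ioc (0:ℝ) (2*π))),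
      Tendsto (fun n => Real.log (‖
        1 + (δ:ℂ) + h ((sn n : ℂ) * Complex.exp ((θ:ℂ) * Complex.I))‖)) atTop
        (nhds (Real.log (‖1 + (δ:ℂ) + hstar θ‖))) := by
    filter_upwards [hlim, habs] with θ hθ hab
    have h1 : Tendsto (fun n => h ((sn n : ℂ) * Complex.exp ((θ:ℂ) * Complex.I))) atTop
        (nhds (hstar θ)) := hθ.comp hstend
    have h2 : Tendsto (fun n => 1 + (δ:ℂ) + h ((sn n : ℂ) * Complex.exp ((θ:ℂ) * Complex.I)))
        atTop (nhds (1 + (δ:ℂ) + hstar θ)) := tendsto_const_nhds.add h1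
    have h3 := (continuous_norm.tendsto _).comp h2
    have hpos : 0 < ‖1 + (δ:ℂ) + hstar θ‖ := by
      have hre' : δ ≤ (1 + (δ:ℂ) + hstar θ).re := by
        have := (abs_le.mp (le_trans (Complex.abs_re_le_norm _) hab)).1
        simp only [Complex.add_re, Complex.one_re, Complex.ofReal_re]
        linarith
      exact lt_of_lt_of_le hδ0 (le_trans hre' (Complex.re_le_norm _))
    exact ((Real.continuousAt_log hpos.ne').tendsto).comp h3
  have hCint : Integrable (fun _ : ℝ => C) (volume.restrict (Set.Ioc (0:ℝ) (2*π))) :=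
    integrableOn_const measure_Ioc_lt_top.ne
  have hdct := MeasureTheory.tendsto_integral_of_dominated_convergence
    (F := fun n (θ : ℝ) => Real.log (‖
      1 + (δ:ℂ) + h ((sn n : ℂ) * Complex.exp ((θ:ℂ) * Complex.I))‖))
    (f := fun θ : ℝ => Real.log (‖1 + (δ:ℂ) + hstar θ‖))
    (fun _ => C) hmeasn hCint
    hbound hptlim
  have heqf : (fun n => ∫ θ in Set.Ioc (0:ℝ) (2*π), Real.log (‖
      1 + (δ:ℂ) + h ((sn n : ℂ) * Complex.exp ((θ:ℂ) * Complex.I))‖))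
      = fun _ => (2*π) * Real.log (1+δ) := funext hmv
  rw [heqf] at hdct
  exact (tendsto_nhds_unique hdct tendsto_const_nhds)

lemma abs_le_abs_add_ofReal {w : ℂ} {d : ℝ} (hd : 0 ≤ d) (hw : 0 ≤ w.re) :
    ‖w‖ ≤ ‖w + (d:ℂ)‖ := by
  rw [Complex.norm_def, Complex.norm_def]
  apply Real.sqrt_le_sqrt
  simp only [Complex.normSq_apply, Complex.add_re, Complex.add_im, Complex.ofReal_re,
    Complex.ofReal_im, add_zero]
  nlinarith

/-- If `h` is holomorphic on the unit disk with values in the closed unit disk and `h(0) = 0`,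
then the mean over the unit circle of `log|1 + h°|` vanishes, where `h°` is the radial boundary
limit (which exists almost everywhere by Fatou's theorem). -/
theorem log_outer_mean_zero (h : ℂ → ℂ)
    (hh : DifferentiableOn ℂ h (Metric.ball (0 : ℂ) 1))
    (hb : ∀ z ∈ Metric.ball (0 : ℂ) 1, ‖h z‖ ≤ 1)
    (h0 : h 0 = 0)
    (hstar : ℝ → ℂ)
    (hlim : ∀ᵐ (θ : ℝ) ∂(volume.restrict (Set.Ioc (0 : ℝ) (2 * π))),
      Tendsto (fun s : ℝ => h ((s : ℂ) * Complex.exp ((θ : ℂ) * Complex.I)))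
        (nhdsWithin 1 (Set.Iio 1)) (nhds (hstar θ))) :
    (1 / (2 * π)) * ∫ θ in Set.Ioc (0 : ℝ) (2 * π),
        Real.log (‖1 + hstar θ‖) = 0 := by
  have hπ := Real.pi_pos
  set μ := volume.restrict (Set.Ioc (0:ℝ) (2*π)) with hμ
  -- radii sequence and its properties (same as in key_delta)
  set sn : ℕ → ℝ := fun n => 1 - 1/(n+2) with hsn
  have hs0 : ∀ n, 0 < sn n := by
    intro n
    have h2 : (1:ℝ)/(n+2) ≤ 1/2 := by
      apply div_le_div_of_nonneg_left (by norm_num) (by norm_num)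
      · push_cast; linarith [Nat.cast_nonneg (α := ℝ) n]
    simp only [hsn]; linarith
  have hs1 : ∀ n, sn n < 1 := by
    intro n
    have : (0:ℝ) < 1/(n+2) := by positivity
    simp only [hsn]; linarith
  have hstend : Tendsto sn atTop (nhdsWithin 1 (Set.Iio 1)) := by
    rw [tendsto_nhdsWithin_iff]
    constructor
    · have h2 : Tendsto (fun n : ℕ => ((n:ℝ)+2)) atTop atTop :=
        tendsto_atTop_add_const_right _ 2 tendsto_natCast_atTop_atTop
      have h3 : Tendsto (fun n : ℕ => 1/((n:ℝ)+2)) atTop (nhds 0) := by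
        simpa [one_div, Pi.inv_def] using h2.inv_tendsto_atTop
      have h4 : Tendsto (fun n : ℕ => 1 - 1/((n:ℝ)+2)) atTop (nhds 1) := by
        simpa using (tendsto_const_nhds (x := (1:ℝ)) (f := atTop (α := ℕ))).sub h3
      exact h4
    · exact Filter.Eventually.of_forall fun n => hs1 n
  -- measurability of hstar
  have hγmeas : ∀ n : ℕ, AEStronglyMeasurable
      (fun θ : ℝ => h ((sn n : ℂ) * Complex.exp ((θ:ℂ) * Complex.I))) μ := by
    intro n
    exact ((hh.continuousOn).comp_continuous
      (continuous_const.mul (Complex.continuous_exp.comp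
        (Complex.continuous_ofReal.mul continuous_const)))
      (fun θ => memball (hs0 n).le (hs1 n) θ)).aestronglyMeasurable
  have hmeas : AEStronglyMeasurable hstar μ := by
    apply aestronglyMeasurable_of_tendsto_ae atTop hγmeas
    filter_upwards [hlim] with θ hθ
    exact hθ.comp hstend
  have habs : ∀ᵐ (θ : ℝ) ∂μ, ‖hstar θ‖ ≤ 1 := by
    filter_upwards [hlim] with θ hθ
    exact le_of_tendsto ((continuous_norm.tendsto _).comp (hθ.comp hstend))
      (Filter.Eventually.of_forall fun n => hb _ (memball (hs0 n).le (hs1 n) θ))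
  -- measurable representative
  set K := hmeas.mk hstar with hK
  have hKmeas : StronglyMeasurable K := hmeas.stronglyMeasurable_mk
  have heq : hstar =ᵐ[μ] K := hmeas.ae_eq_mk
  have hlimK : ∀ᵐ (θ : ℝ) ∂μ,
      Tendsto (fun s : ℝ => h ((s : ℂ) * Complex.exp ((θ : ℂ) * Complex.I)))
        (nhdsWithin 1 (Set.Iio 1)) (nhds (K θ)) := by
    filter_upwards [hlim, heq] with θ h1 h2
    exact h2 ▸ h1
  have habsK : ∀ᵐ (θ : ℝ) ∂μ, ‖K θ‖ ≤ 1 := by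
    filter_upwards [habs, heq] with θ h1 h2
    exact h2 ▸ h1
  -- δ sequence
  set δs : ℕ → ℝ := fun n => 1/((n:ℝ)+1) with hδs
  have hδ0 : ∀ n, 0 < δs n := by intro n; positivity
  have hδ1 : ∀ n, δs n ≤ 1 := by
    intro n
    rw [hδs]
    rw [div_le_one (by positivity)]
    linarith [Nat.cast_nonneg (α := ℝ) n]
  have hδtend : Tendsto δs atTop (nhds 0) := by
    have h2 : Tendsto (fun n : ℕ => ((n:ℝ)+1)) atTop atTop :=
      tendsto_atTop_add_const_right _ 1 tendsto_natCast_atTop_atTop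
    simpa [hδs, one_div, Pi.inv_def] using h2.inv_tendsto_atTop
  -- the integrals from the key lemma
  have hint : ∀ n, ∫ θ in Set.Ioc (0:ℝ) (2*π),
      Real.log (‖1 + (δs n : ℂ) + K θ‖) = (2*π) * Real.log (1 + δs n) :=
    fun n => key_delta h hh hb h0 K hlimK habsK (hδ0 n) (hδ1 n)
  -- notations
  set g : ℕ → ℝ → ℝ := fun n θ => Real.log (‖1 + (δs n : ℂ) + K θ‖) with hg
  set g0 : ℝ → ℝ := fun θ => Real.log (‖1 + K θ‖) with hg0
  have hgmeas : ∀ n, Measurable (g n) := by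
    intro n
    exact Real.measurable_log.comp (continuous_norm.measurable.comp
      (hKmeas.measurable.const_add _))
  have hg0meas : Measurable g0 :=
    Real.measurable_log.comp (continuous_norm.measurable.comp
      (hKmeas.measurable.const_add _))
  have hlog3 : (0:ℝ) ≤ Real.log 3 := Real.log_nonneg (by norm_num)
  -- basic pointwise bounds
  have hlb : ∀ n, ∀ᵐ (θ : ℝ) ∂μ, δs n ≤ ‖1 + (δs n : ℂ) + K θ‖ := by
    intro n
    filter_upwards [habsK] with θ hab
    have h2 := (abs_le.mp (le_trans (Complex.abs_re_le_norm _) hab)).1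
    have hre' : δs n ≤ (1 + (δs n : ℂ) + K θ).re := by
      simp only [Complex.add_re, Complex.one_re, Complex.ofReal_re]
      linarith
    exact le_trans hre' (Complex.re_le_norm _)
  have hub' : ∀ n, ∀ᵐ (θ : ℝ) ∂μ, ‖1 + (δs n : ℂ) + K θ‖ ≤ 3 := by
    intro n
    filter_upwards [habsK] with θ hab
    have habs1δ : ‖1 + (δs n : ℂ)‖ = 1 + δs n := by
      have : (1:ℂ) + ((δs n : ℝ):ℂ) = ((1 + δs n : ℝ) : ℂ) := by push_cast; ring
      rw [this, Complex.norm_of_nonneg (by linarith [hδ0 n])]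
    calc ‖1 + (δs n : ℂ) + K θ‖
        ≤ ‖1 + (δs n : ℂ)‖ + ‖K θ‖ := norm_add_le _ _
      _ ≤ (1 + δs n) + 1 := by rw [habs1δ]; exact add_le_add_right hab _
      _ ≤ 3 := by linarith [hδ1 n]
  have hub : ∀ n, ∀ᵐ (θ : ℝ) ∂μ, g n θ ≤ Real.log 3 := by
    intro n
    filter_upwards [hlb n, hub' n] with θ h1 h2
    exact Real.log_le_log (lt_of_lt_of_le (hδ0 n) h1) h2
  -- integrability of each g n
  have hgint : ∀ n, Integrable (g n) μ := by
    intro n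
    apply Integrable.mono' (g := fun _ => max (-Real.log (δs n)) (Real.log 3))
      (integrableOn_const measure_Ioc_lt_top.ne)
      ((hgmeas n).aestronglyMeasurable)
    filter_upwards [hlb n, hub' n] with θ h1 h2
    rw [Real.norm_eq_abs, abs_le]
    constructor
    · have hl : Real.log (δs n) ≤ g n θ := Real.log_le_log (hδ0 n) h1
      have := le_max_left (-Real.log (δs n)) (Real.log 3)
      linarith
    · exact le_trans (Real.log_le_log (lt_of_lt_of_le (hδ0 n) h1) h2) (le_max_right _ _)
  -- total measure
  have hμuniv : (μ Set.univ).toReal = 2*π := by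
    rw [hμ, Measure.restrict_apply_univ, Real.volume_Ioc]
    rw [ENNReal.toReal_ofReal (by linarith)]
    ring
  -- the lintegral computation
  set φ : ℕ → ℝ → ENNReal := fun n θ => ENNReal.ofReal (Real.log 3 - g n θ) with hφ
  have hφmeas : ∀ n, Measurable (φ n) := fun n =>
    ENNReal.measurable_ofReal.comp (measurable_const.sub (hgmeas n))
  have hφlint : ∀ n, ∫⁻ θ, φ n θ ∂μ ≤ ENNReal.ofReal ((2*π) * Real.log 3) := by
    intro n
    have hintsub : Integrable (fun θ => Real.log 3 - g n θ) μ :=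
      (integrable_const _).sub (hgint n)
    have hnn : 0 ≤ᵐ[μ] fun θ => Real.log 3 - g n θ := by
      filter_upwards [hub n] with θ h1
      simp only [Pi.zero_apply]; linarith
    rw [hφ, ← ofReal_integral_eq_lintegral_ofReal hintsub hnn]
    apply ENNReal.ofReal_le_ofReal
    rw [integral_sub (integrable_const _) (hgint n), hint n, integral_const, measureReal_def, hμuniv,
      smul_eq_mul]
    have : (0:ℝ) ≤ Real.log (1 + δs n) := Real.log_nonneg (by linarith [hδ0 n])
    nlinarith
  set L : ℝ → ENNReal := fun θ => liminf (fun n => φ n θ) atTop with hL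
  have hLmeas : Measurable L := Measurable.liminf hφmeas
  have hLlint : ∫⁻ θ, L θ ∂μ ≤ ENNReal.ofReal ((2*π) * Real.log 3) := by
    refine le_trans (lintegral_liminf_le hφmeas) ?_
    refine le_trans (liminf_le_liminf (Filter.Eventually.of_forall hφlint)) ?_
    simp [liminf_const]
  have hfin : ∀ᵐ (θ : ℝ) ∂μ, L θ < ⊤ :=
    ae_lt_top hLmeas (ne_of_lt (lt_of_le_of_lt hLlint ENNReal.ofReal_lt_top))
  -- the boundary value is a.e. ≠ -1
  have hne : ∀ᵐ (θ : ℝ) ∂μ, 1 + K θ ≠ 0 := by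
    filter_upwards [hfin] with θ hθ
    intro hzero
    have hval : ∀ n, g n θ = Real.log (δs n) := by
      intro n
      have : (1:ℂ) + (δs n : ℂ) + K θ = (δs n : ℂ) + (1 + K θ) := by ring
      rw [hg]
      simp only [this, hzero, add_zero, Complex.norm_of_nonneg (hδ0 n).le]
    have hlogδ : ∀ n, Real.log (δs n) = -Real.log ((n:ℝ)+1) := by
      intro n
      rw [hδs]
      simp [one_div, Real.log_inv]
    have hn1 : Tendsto (fun n : ℕ => ((n:ℝ)+1)) atTop atTop :=
      tendsto_atTop_add_const_right _ 1 tendsto_natCast_atTop_atTop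
    have htop : Tendsto (fun n : ℕ => Real.log 3 + Real.log ((n:ℝ)+1)) atTop atTop :=
      tendsto_atTop_add_const_left _ _ (Real.tendsto_log_atTop.comp hn1)
    have hφtop : Tendsto (fun n => φ n θ) atTop (nhds ⊤) := by
      have heqφ : (fun n => φ n θ) = fun n : ℕ => ENNReal.ofReal
          (Real.log 3 + Real.log ((n:ℝ)+1)) := by
        funext n
        rw [hφ]
        simp only [hval n, hlogδ n]
        ring_nf
      rw [heqφ]
      exact ENNReal.tendsto_ofReal_atTop.comp htop
    have : L θ = ⊤ := hφtop.liminf_eq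
    rw [this] at hθ
    exact absurd hθ (lt_irrefl _)
  have hpos : ∀ᵐ (θ : ℝ) ∂μ, 0 < ‖1 + K θ‖ := by
    filter_upwards [hne] with θ hθ
    exact norm_pos_iff.mpr hθ
  -- lower bound: g0 ≤ g n
  have hmono : ∀ᵐ (θ : ℝ) ∂μ, ∀ n, g0 θ ≤ g n θ := by
    filter_upwards [hpos, habsK] with θ h1 h2
    intro n
    have hrenn : 0 ≤ (1 + K θ).re := by
      have := (abs_le.mp (le_trans (Complex.abs_re_le_norm _) h2)).1
      simp only [Complex.add_re, Complex.one_re]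
      linarith
    have hW : (1:ℂ) + (δs n : ℂ) + K θ = (1 + K θ) + (δs n : ℂ) := by ring
    rw [hg, hg0]
    simp only [hW]
    exact Real.log_le_log h1 (abs_le_abs_add_ofReal (hδ0 n).le hrenn)
  -- a.e. convergence g n → g0
  have hconv : ∀ᵐ (θ : ℝ) ∂μ, Tendsto (fun n => g n θ) atTop (nhds (g0 θ)) := by
    filter_upwards [hpos] with θ h1
    have hδC : Tendsto (fun n => ((δs n : ℝ) : ℂ)) atTop (nhds 0) := by
      have := (Complex.continuous_ofReal.tendsto 0).comp hδtend
      simpa [Function.comp_def] using this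
    have h2 : Tendsto (fun n => (1:ℂ) + (δs n : ℂ) + K θ) atTop (nhds (1 + K θ)) := by
      have := (tendsto_const_nhds (x := (1:ℂ)) (f := atTop (α := ℕ))).add hδC
      have h3 := this.add (tendsto_const_nhds (x := K θ) (f := atTop (α := ℕ)))
      simpa using h3
    have h3 := (continuous_norm.tendsto _).comp h2
    exact ((Real.continuousAt_log h1.ne').tendsto).comp h3
  -- integrability of g0
  have hg0ub : ∀ᵐ (θ : ℝ) ∂μ, g0 θ ≤ Real.log 3 := by
    filter_upwards [hpos, habsK] with θ h1 h2
    have : ‖1 + K θ‖ ≤ 3 := by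
      calc ‖1 + K θ‖ ≤ ‖1‖ + ‖K θ‖ := norm_add_le _ _
        _ ≤ 3 := by simp only [norm_one]; linarith
    exact Real.log_le_log h1 this
  have hsubint : Integrable (fun θ => Real.log 3 - g0 θ) μ := by
    refine ⟨(measurable_const.sub hg0meas).aestronglyMeasurable, ?_⟩
    have hnn : 0 ≤ᵐ[μ] fun θ => Real.log 3 - g0 θ := by
      filter_upwards [hg0ub] with θ h1
      simp only [Pi.zero_apply]; linarith
    rw [hasFiniteIntegral_iff_ofReal hnn]
    have hcongr : (fun θ => ENNReal.ofReal (Real.log 3 - g0 θ)) =ᵐ[μ] L := by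
      filter_upwards [hconv] with θ h1
      have h2 : Tendsto (fun n => φ n θ) atTop (nhds (ENNReal.ofReal (Real.log 3 - g0 θ))) := by
        apply (ENNReal.continuous_ofReal.tendsto _).comp
        exact tendsto_const_nhds.sub h1
      exact h2.liminf_eq.symm
    rw [lintegral_congr_ae hcongr]
    exact lt_of_le_of_lt hLlint ENNReal.ofReal_lt_top
  have hg0int : Integrable g0 μ := by
    have := (integrable_const (Real.log 3) (μ := μ)).sub hsubint
    have h2 : ((fun _ : ℝ => Real.log 3) - fun θ => Real.log 3 - g0 θ) = g0 := by
      funext θ; simp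
    rwa [h2] at this
  -- final dominated convergence
  have hbound : ∀ n, ∀ᵐ (θ : ℝ) ∂μ, ‖g n θ‖ ≤ |g0 θ| + Real.log 3 := by
    intro n
    filter_upwards [hmono, hub n] with θ h1 h2
    rw [Real.norm_eq_abs, abs_le]
    constructor
    · have := neg_abs_le (g0 θ)
      linarith [h1 n]
    · linarith [abs_nonneg (g0 θ)]
  have hdct := MeasureTheory.tendsto_integral_of_dominated_convergence
    (F := g) (f := g0) (fun θ => |g0 θ| + Real.log 3)
    (fun n => (hgmeas n).aestronglyMeasurable)
    (hg0int.abs.add (integrable_const _))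
    hbound hconv
  have hvals : (fun n => ∫ θ, g n θ ∂μ) = fun n => (2*π) * Real.log (1 + δs n) :=
    funext fun n => hint n
  rw [hvals] at hdct
  have hval0 : Tendsto (fun n => (2*π) * Real.log (1 + δs n)) atTop (nhds 0) := by
    have h1 : Tendsto (fun n => 1 + δs n) atTop (nhds 1) := by
      have := (tendsto_const_nhds (x := (1:ℝ)) (f := atTop (α := ℕ))).add hδtend
      simpa using this
    have h2 : Tendsto (fun n => Real.log (1 + δs n)) atTop (nhds 0) := by
      have := ((Real.continuousAt_log (by norm_num : (1:ℝ) ≠ 0)).tendsto).comp h1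
      simpa [Function.comp_def] using this
    have := (tendsto_const_nhds (x := 2*π) (f := atTop (α := ℕ))).mul h2
    simpa using this
  have hfinal : ∫ θ, g0 θ ∂μ = 0 := tendsto_nhds_unique hdct hval0
  have hstareq : ∫ θ in Set.Ioc (0:ℝ) (2*π), Real.log (‖1 + hstar θ‖)
      = ∫ θ, g0 θ ∂μ := by
    apply integral_congr_ae
    filter_upwards [heq] with θ h1
    rw [hg0]
    simp only [h1]
  rw [hstareq, hfinal, mul_zero]
end

section
/- Let g : 𝕋^d → ℂ be continuous and let η ∈ ℝ^d have strictly positive entries that are linearly independent over ℚ. Then lim_{L→∞} (1/(2L)) ∫_{-L}^{L} g(e^{iη₁ω},...,e^{iη_dω}) dω = ∫_{𝕋^d} g dτ. -/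
open Complex Real MeasureTheory Filter

namespace TE
variable (d : ℕ)

def T : Set (Fin d → ℂ) := {z | ∀ j, ‖z j‖ = 1}

lemma T_eq : T d = Set.univ.pi (fun _ => Metric.sphere (0:ℂ) 1) := by
  ext z
  simp [T, Complex.dist_eq, Metric.mem_sphere,
    Set.mem_pi]


instance : CompactSpace (T d) := by
  rw [← isCompact_iff_compactSpace, T_eq]
  exact isCompact_univ_pi (fun _ => isCompact_sphere 0 1)

variable {d}

lemma ne_zero_of_mem {z : Fin d → ℂ} (hz : z ∈ T d) (j : Fin d) : z j ≠ 0 := by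
  intro h
  have := hz j
  rw [h] at this
  simp at this

noncomputable def mono (n : Fin d → ℤ) : C(T d, ℂ) :=
  ⟨fun z => ∏ j, (z.1 j) ^ (n j), by
    apply continuous_finset_prod
    intro j _
    exact (Continuous.comp (continuous_apply j) continuous_subtype_val).zpow₀ (n j)
      (fun z => Or.inl (ne_zero_of_mem z.2 j))⟩

end TE

namespace TE
variable {d : ℕ}

lemma mono_mul (n m : Fin d → ℤ) : mono n * mono m = mono (n + m) := by
  ext z
  simp only [mono, ContinuousMap.mul_apply, ContinuousMap.coe_mk, Pi.add_apply,
    ← Finset.prod_mul_distrib]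
  exact Finset.prod_congr rfl fun j _ => (zpow_add₀ (ne_zero_of_mem z.2 j) _ _).symm

lemma mono_zero : mono (0 : Fin d → ℤ) = 1 := by
  ext z; simp [mono]

lemma star_mono (n : Fin d → ℤ) : star (mono n) = mono (-n) := by
  ext z
  simp only [mono, ContinuousMap.star_apply, ContinuousMap.coe_mk, Pi.neg_apply, zpow_neg]
  rw [star_prod]
  refine Finset.prod_congr rfl fun j _ => ?_
  rw [star_zpow₀, Complex.star_def, ← Complex.inv_eq_conj (z.2 j), inv_zpow]

lemma one_mem_span : (1 : C(T d, ℂ)) ∈ Submodule.span ℂ (Set.range (mono (d := d))) := by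
  rw [← mono_zero]; exact Submodule.subset_span ⟨0, rfl⟩

lemma mul_mem_span {a b : C(T d, ℂ)}
    (ha : a ∈ Submodule.span ℂ (Set.range (mono (d := d))))
    (hb : b ∈ Submodule.span ℂ (Set.range (mono (d := d)))) :
    a * b ∈ Submodule.span ℂ (Set.range (mono (d := d))) := by
  have : a * b ∈ Submodule.span ℂ (Set.range (mono (d := d))) *
      Submodule.span ℂ (Set.range (mono (d := d))) := Submodule.mul_mem_mul ha hb
  rw [Submodule.span_mul_span] at this
  refine Submodule.span_le.mpr ?_ this
  rintro x ⟨p, ⟨n, rfl⟩, q, ⟨m, rfl⟩, rfl⟩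
  show mono n * mono m ∈ _
  rw [mono_mul]
  exact Submodule.subset_span ⟨n + m, rfl⟩

lemma star_mem_span {a : C(T d, ℂ)}
    (ha : a ∈ Submodule.span ℂ (Set.range (mono (d := d)))) :
    star a ∈ Submodule.span ℂ (Set.range (mono (d := d))) := by
  induction ha using Submodule.span_induction with
  | mem x hx =>
    obtain ⟨n, rfl⟩ := hx
    rw [star_mono]
    exact Submodule.subset_span ⟨-n, rfl⟩
  | zero => simp only [star_zero]; exact Submodule.zero_mem _
  | add x y _ _ hx hy => rw [star_add]; exact Submodule.add_mem _ hx hy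
  | smul c x _ hx =>
    rw [star_smul]
    exact Submodule.smul_mem _ _ hx

noncomputable def monoAlg (d : ℕ) : StarSubalgebra ℂ C(T d, ℂ) where
  toSubalgebra := Submodule.toSubalgebra (Submodule.span ℂ (Set.range mono))
    one_mem_span (fun _ _ => mul_mem_span)
  star_mem' := star_mem_span

lemma mem_monoAlg {f : C(T d, ℂ)} :
    f ∈ monoAlg d ↔ f ∈ Submodule.span ℂ (Set.range (mono (d := d))) := Iff.rfl

lemma monoAlg_sep (d : ℕ) : (monoAlg d).SeparatesPoints := by
  intro x y hxy
  obtain ⟨j, hj⟩ : ∃ j, x.1 j ≠ y.1 j := by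
    by_contra h
    push_neg at h
    exact hxy (Subtype.ext (funext h))
  refine ⟨_, ⟨mono (Pi.single j 1), ?_, rfl⟩, ?_⟩
  · show _ ∈ Submodule.span ℂ (Set.range (mono (d := d)))
    exact Submodule.subset_span ⟨_, rfl⟩
  have key : ∀ z : T d, mono (Pi.single j 1) z = z.1 j := by
    intro z
    simp only [mono, ContinuousMap.coe_mk]
    rw [Finset.prod_eq_single j]
    · simp
    · intro b _ hb; simp [Pi.single_apply, hb]
    · simp
  simpa [key] using hj

lemma monoAlg_dense (d : ℕ) : (monoAlg d).topologicalClosure = ⊤ :=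
  ContinuousMap.starSubalgebra_topologicalClosure_eq_top_of_separatesPoints _ (monoAlg_sep d)

end TE
namespace TE

variable {d : ℕ}

noncomputable def line (η : Fin d → ℝ) (ω : ℝ) : T (d := d) :=
  ⟨fun j => Complex.exp ((η j : ℂ) * (ω : ℂ) * Complex.I), by
    intro j
    simp [T, Complex.norm_exp]⟩

noncomputable def param (θ : Fin d → ℝ) : T (d := d) :=
  ⟨fun j => Complex.exp ((θ j : ℂ) * Complex.I), by
    intro j
    simp [T, Complex.norm_exp]⟩

lemma continuous_line (η : Fin d → ℝ) : Continuous (line η) := by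
  apply Continuous.subtype_mk
  apply continuous_pi
  intro j
  exact Complex.continuous_exp.comp (by continuity)

lemma continuous_param : Continuous (param (d := d)) := by
  apply Continuous.subtype_mk
  apply continuous_pi
  intro j
  exact Complex.continuous_exp.comp (by continuity)

def box (d : ℕ) : Set (Fin d → ℝ) := Set.univ.pi (fun _ => Set.Ioc (0 : ℝ) (2 * π))

noncomputable def timeAvg (η : Fin d → ℝ) (f : C(T (d := d), ℂ)) (L : ℝ) : ℂ :=
  (1 / (2 * L) : ℝ) • ∫ ω in (-L)..L, f (line η ω)

noncomputable def spaceAvg (f : C(T (d := d), ℂ)) : ℂ :=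
  (1 / (2 * π) ^ d : ℝ) • ∫ θ in box d, f (param θ)

end TE
namespace TE
variable {d : ℕ}

lemma mono_line (η : Fin d → ℝ) (n : Fin d → ℤ) (ω : ℝ) :
    mono n (line η ω) = Complex.exp (((∑ j, (n j : ℝ) * η j : ℝ) : ℂ) * (ω : ℂ) * Complex.I) := by
  simp only [mono, line, ContinuousMap.coe_mk]
  have h1 : ∀ j, Complex.exp ((η j : ℂ) * (ω : ℂ) * Complex.I) ^ (n j)
      = Complex.exp ((n j : ℂ) * ((η j : ℂ) * (ω : ℂ) * Complex.I)) := by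
    intro j
    rw [← Complex.exp_int_mul]
  simp only [h1, ← Complex.exp_sum]
  congr 1
  push_cast
  rw [Finset.sum_mul, Finset.sum_mul]
  exact Finset.sum_congr rfl fun j _ => by ring

lemma mono_param (n : Fin d → ℤ) (θ : Fin d → ℝ) :
    mono n (param θ) = ∏ j, Complex.exp ((n j : ℂ) * (θ j : ℂ) * Complex.I) := by
  simp only [mono, param, ContinuousMap.coe_mk]
  refine Finset.prod_congr rfl fun j _ => ?_
  rw [← Complex.exp_int_mul]
  ring_nf

lemma sum_ne_zero (η : Fin d → ℝ) (hind : LinearIndependent ℚ η)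
    {n : Fin d → ℤ} (hn : n ≠ 0) : (∑ j, (n j : ℝ) * η j) ≠ 0 := by
  intro h
  apply hn
  funext j
  have key := Fintype.linearIndependent_iff.mp hind (fun i => (n i : ℚ)) ?_ j
  · exact_mod_cast key
  · rw [← h]
    exact Finset.sum_congr rfl fun i _ => by
      rw [Rat.smul_def]; push_cast; ring

end TE
namespace TE
open Topology
variable {d : ℕ}

lemma timeAvg_mono (η : Fin d → ℝ) (hind : LinearIndependent ℚ η) (n : Fin d → ℤ) :
    Tendsto (timeAvg η (mono n)) atTop (𝓝 (if n = 0 then 1 else 0)) := by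
  by_cases hn : n = 0
  · subst hn
    simp only [if_pos rfl]
    have heq : ∀ᶠ L in atTop, timeAvg η (mono 0) (L : ℝ) = 1 := by
      filter_upwards [eventually_gt_atTop (0 : ℝ)] with L hL
      simp only [timeAvg, mono_zero, ContinuousMap.one_apply]
      rw [intervalIntegral.integral_const, sub_neg_eq_add, smul_smul]
      have h1 : (1 / (2 * L)) * (L + L) = 1 := by field_simp; ring
      rw [h1, one_smul]
    exact Tendsto.congr' (EventuallyEq.symm heq) tendsto_const_nhds
  · simp only [if_neg hn]
    set c : ℝ := ∑ j, (n j : ℝ) * η j with hc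
    have hc0 : c ≠ 0 := sum_ne_zero η hind hn
    have hc0' : (c : ℂ) * Complex.I ≠ 0 :=
      mul_ne_zero (Complex.ofReal_ne_zero.mpr hc0) Complex.I_ne_zero
    have hint : ∀ L : ℝ, (∫ ω in (-L)..L, mono n (line η ω))
        = (Complex.exp ((c : ℂ) * Complex.I * L) - Complex.exp ((c : ℂ) * Complex.I * (-L)))
          / ((c : ℂ) * Complex.I) := by
      intro L
      rw [show (∫ ω in (-L)..L, mono n (line η ω))
          = ∫ ω in (-L)..L, Complex.exp (((c : ℂ) * Complex.I) * (ω : ℂ)) from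
        intervalIntegral.integral_congr fun ω _ => by rw [mono_line, ← hc]; ring_nf,
        integral_exp_mul_complex hc0']
      push_cast
      ring_nf
    apply squeeze_zero_norm' (a := fun L => L⁻¹ * |c|⁻¹)
    · filter_upwards [eventually_gt_atTop (0 : ℝ)] with L hL
      rw [timeAvg, hint, norm_smul]
      have e1 : ∀ x : ℝ, ‖Complex.exp ((c : ℂ) * Complex.I * (x : ℂ))‖ = 1 := by
        intro x
        rw [Complex.norm_exp]
        simp
      have hnum : ‖Complex.exp ((c : ℂ) * Complex.I * L)
          - Complex.exp ((c : ℂ) * Complex.I * (-L))‖ ≤ 2 := by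
        refine (norm_sub_le _ _).trans ?_
        rw [show (-(L : ℂ)) = ((-L : ℝ) : ℂ) by push_cast; ring, e1 L, e1 (-L)]
        norm_num
      have hden : ‖(c : ℂ) * Complex.I‖ = |c| := by
        simp
      have habs : (0:ℝ) < |c| := abs_pos.mpr hc0
      have hb : ‖(Complex.exp ((c : ℂ) * Complex.I * L)
          - Complex.exp ((c : ℂ) * Complex.I * (-L))) / ((c : ℂ) * Complex.I)‖ ≤ 2 / |c| := by
        rw [norm_div, hden]
        gcongr
      rw [Real.norm_eq_abs, abs_of_pos (show (0:ℝ) < 1 / (2 * L) by positivity)]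
      calc 1 / (2 * L) * ‖(Complex.exp ((c : ℂ) * Complex.I * L)
            - Complex.exp ((c : ℂ) * Complex.I * (-L))) / ((c : ℂ) * Complex.I)‖
          ≤ 1 / (2 * L) * (2 / |c|) := by gcongr
        _ = L⁻¹ * |c|⁻¹ := by field_simp
    · have := (tendsto_inv_atTop_zero (𝕜 := ℝ)).mul_const |c|⁻¹
      simpa using this
end TE
namespace TE
open Topology
variable {d : ℕ}

lemma circle_integral (m : ℤ) :
    (∫ t in Set.Ioc (0:ℝ) (2*π), Complex.exp ((m : ℂ) * (t : ℂ) * Complex.I))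
      = if m = 0 then ((2*π : ℝ) : ℂ) else 0 := by
  rw [← intervalIntegral.integral_of_le (by positivity)]
  by_cases hm : m = 0
  · subst hm
    simp only [Int.cast_zero, zero_mul, Complex.exp_zero, if_pos rfl]
    rw [intervalIntegral.integral_const]
    simp
  · rw [if_neg hm]
    have h0 : ((m : ℂ) * Complex.I) ≠ 0 :=
      mul_ne_zero (Int.cast_ne_zero.mpr hm) Complex.I_ne_zero
    rw [show (∫ t in (0:ℝ)..(2*π), Complex.exp ((m : ℂ) * (t : ℂ) * Complex.I))
        = ∫ t in (0:ℝ)..(2*π), Complex.exp (((m : ℂ) * Complex.I) * (t : ℂ)) from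
      intervalIntegral.integral_congr fun t _ => by ring_nf,
      integral_exp_mul_complex h0]
    have : Complex.exp ((m : ℂ) * Complex.I * ((2*π : ℝ) : ℂ)) = 1 := by
      rw [show (m : ℂ) * Complex.I * ((2*π : ℝ) : ℂ) = (m : ℂ) * (2 * (π : ℂ) * Complex.I) by
        push_cast; ring]
      exact Complex.exp_int_mul_two_pi_mul_I m
    rw [this]
    simp

lemma spaceAvg_mono (n : Fin d → ℤ) :
    spaceAvg (mono n) = if n = 0 then 1 else 0 := by
  have key : (∫ θ in box d, mono n (param θ))
      = ∏ j, ∫ t in Set.Ioc (0:ℝ) (2*π), Complex.exp ((n j : ℂ) * (t : ℂ) * Complex.I) := by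
    rw [show (∫ θ in box d, mono n (param θ))
        = ∫ θ in box d, ∏ j, Complex.exp ((n j : ℂ) * (θ j : ℂ) * Complex.I) from
      setIntegral_congr_fun (by
        exact MeasurableSet.univ_pi fun _ => measurableSet_Ioc) fun θ _ => mono_param n θ]
    unfold box
    rw [← integral_indicator (MeasurableSet.univ_pi fun _ => measurableSet_Ioc)]
    have hind : ∀ θ : Fin d → ℝ,
        (Set.univ.pi fun _ => Set.Ioc (0:ℝ) (2*π)).indicator
            (fun θ => ∏ j, Complex.exp ((n j : ℂ) * (θ j : ℂ) * Complex.I)) θ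
        = ∏ j, (Set.Ioc (0:ℝ) (2*π)).indicator
            (fun t => Complex.exp ((n j : ℂ) * (t : ℂ) * Complex.I)) (θ j) := by
      intro θ
      by_cases hθ : θ ∈ Set.univ.pi fun _ => Set.Ioc (0:ℝ) (2*π)
      · rw [Set.indicator_of_mem hθ]
        refine Finset.prod_congr rfl fun j _ => ?_
        rw [Set.indicator_of_mem (hθ j (Set.mem_univ j))]
      · rw [Set.indicator_of_notMem hθ]
        simp only [Set.mem_pi, Set.mem_univ, forall_true_left, not_forall] at hθ
        obtain ⟨j, hj⟩ := hθ
        exact (Finset.prod_eq_zero (Finset.mem_univ j)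
          (by rw [Set.indicator_of_notMem hj])).symm
    simp only [hind]
    rw [MeasureTheory.integral_fintype_prod_volume_eq_prod
      (f := fun j t => (Set.Ioc (0:ℝ) (2*π)).indicator
        (fun t => Complex.exp ((n j : ℂ) * (t : ℂ) * Complex.I)) t)]
    exact Finset.prod_congr rfl fun j _ =>
      integral_indicator measurableSet_Ioc
  rw [spaceAvg, key]
  by_cases hn : n = 0
  · subst hn
    simp only [if_pos rfl, Pi.zero_apply, circle_integral 0, if_pos rfl]
    rw [Finset.prod_const, Finset.card_univ, Fintype.card_fin]
    rw [real_smul]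
    push_cast
    have h2 : ((2:ℂ) * (π:ℂ)) ^ d ≠ 0 := by
      apply pow_ne_zero
      have h3 : (2*π:ℝ) ≠ 0 := by positivity
      have := Complex.ofReal_ne_zero.mpr h3
      push_cast at this
      exact this
    field_simp
  · rw [if_neg hn]
    obtain ⟨j, hj⟩ : ∃ j, n j ≠ 0 := by
      by_contra h
      push_neg at h
      exact hn (funext h)
    rw [Finset.prod_eq_zero (Finset.mem_univ j) (by rw [circle_integral, if_neg hj]), smul_zero]
end TE
namespace TE
open Topology
variable {d : ℕ}

def Good (η : Fin d → ℝ) (f : C(T (d := d), ℂ)) : Prop :=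
  Tendsto (timeAvg η f) atTop (𝓝 (spaceAvg f))

lemma intInt (η : Fin d → ℝ) (f : C(T (d := d), ℂ)) (a b : ℝ) :
    IntervalIntegrable (fun ω => f (line η ω)) volume a b :=
  (f.continuous.comp (continuous_line η)).intervalIntegrable a b

lemma intOn (f : C(T (d := d), ℂ)) : IntegrableOn (fun θ => f (param θ)) (box d) volume := by
  have hc : Continuous fun θ : Fin d → ℝ => f (param θ) := f.continuous.comp continuous_param
  have hK : IsCompact (Set.univ.pi fun _ : Fin d => Set.Icc (0:ℝ) (2*π)) :=
    isCompact_univ_pi fun _ => isCompact_Icc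
  exact (hc.continuousOn.integrableOn_compact hK).mono_set
    (fun θ hθ j hj => Set.Ioc_subset_Icc_self (hθ j hj))

lemma timeAvg_add (η : Fin d → ℝ) (f g : C(T (d := d), ℂ)) (L : ℝ) :
    timeAvg η (f + g) L = timeAvg η f L + timeAvg η g L := by
  simp only [timeAvg, ContinuousMap.add_apply]
  rw [intervalIntegral.integral_add (intInt η f _ _) (intInt η g _ _), smul_add]

lemma timeAvg_smul (η : Fin d → ℝ) (c : ℂ) (f : C(T (d := d), ℂ)) (L : ℝ) :
    timeAvg η (c • f) L = c * timeAvg η f L := by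
  simp only [timeAvg, ContinuousMap.smul_apply]
  rw [intervalIntegral.integral_smul, smul_comm, smul_eq_mul]

lemma spaceAvg_add (f g : C(T (d := d), ℂ)) :
    spaceAvg (f + g) = spaceAvg f + spaceAvg g := by
  simp only [spaceAvg, ContinuousMap.add_apply]
  rw [integral_add (intOn f) (intOn g), smul_add]

lemma spaceAvg_smul (c : ℂ) (f : C(T (d := d), ℂ)) :
    spaceAvg (c • f) = c * spaceAvg f := by
  simp only [spaceAvg, ContinuousMap.smul_apply]
  rw [integral_smul, smul_comm, smul_eq_mul]

lemma good_span (η : Fin d → ℝ) (hind : LinearIndependent ℚ η) (f : C(T (d := d), ℂ))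
    (hf : f ∈ Submodule.span ℂ (Set.range (mono (d := d)))) : Good η f := by
  induction hf using Submodule.span_induction with
  | mem x hx =>
    obtain ⟨n, rfl⟩ := hx
    unfold Good
    rw [spaceAvg_mono]
    exact timeAvg_mono η hind n
  | zero =>
    have h0 : spaceAvg (0 : C(T (d := d), ℂ)) = 0 := by simp [spaceAvg]
    have h1 : ∀ L, timeAvg η (0 : C(T (d := d), ℂ)) L = 0 := by intro L; simp [timeAvg]
    unfold Good
    rw [h0]
    exact Tendsto.congr (fun L => (h1 L).symm) tendsto_const_nhds
  | add x y _ _ hx hy =>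
    unfold Good at hx hy ⊢
    rw [spaceAvg_add]
    exact Tendsto.congr (fun L => (timeAvg_add η x y L).symm) (hx.add hy)
  | smul c x _ hx =>
    unfold Good at hx ⊢
    rw [spaceAvg_smul]
    exact Tendsto.congr (fun L => (timeAvg_smul η c x L).symm)
      ((tendsto_const_nhds (x := c)).mul hx)

lemma volume_box : volume (box d) = ENNReal.ofReal (2*π) ^ d := by
  rw [box, volume_pi_pi]
  simp [Real.volume_Ioc]

lemma volume_box_toReal : (volume (box d)).toReal = (2*π)^d := by
  rw [volume_box, ENNReal.toReal_pow, ENNReal.toReal_ofReal (by positivity)]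

lemma timeAvg_norm_le (η : Fin d → ℝ) (f : C(T (d := d), ℂ)) {L : ℝ} (hL : 0 < L) :
    ‖timeAvg η f L‖ ≤ ‖f‖ := by
  rw [timeAvg, norm_smul, Real.norm_eq_abs, abs_of_pos (by positivity)]
  have hb := intervalIntegral.norm_integral_le_of_norm_le_const
    (C := ‖f‖) (f := fun ω => f (line η ω)) (a := -L) (b := L)
    (fun ω _ => f.norm_coe_le_norm _)
  calc (1 / (2*L)) * ‖∫ ω in (-L)..L, f (line η ω)‖
      ≤ (1 / (2*L)) * (‖f‖ * |L - (-L)|) := mul_le_mul_of_nonneg_left hb (by positivity)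
    _ = ‖f‖ := by
      have h2 : L - -L = 2 * L := by ring
      rw [abs_of_pos (by linarith), h2, one_div, mul_comm ‖f‖ (2*L),
        inv_mul_cancel_left₀ (by positivity)]

lemma spaceAvg_norm_le (f : C(T (d := d), ℂ)) : ‖spaceAvg f‖ ≤ ‖f‖ := by
  rw [spaceAvg, norm_smul, Real.norm_eq_abs, abs_of_pos (by positivity)]
  have hb := MeasureTheory.norm_setIntegral_le_of_norm_le_const (μ := volume) (s := box d)
    (C := ‖f‖) (f := fun θ => f (param θ))
    (by rw [volume_box]; exact ENNReal.pow_lt_top ENNReal.ofReal_lt_top)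
    (fun θ _ => f.norm_coe_le_norm _)
  rw [measureReal_def, volume_box_toReal] at hb
  calc (1 / (2*π)^d) * ‖∫ θ in box d, f (param θ)‖
      ≤ (1 / (2*π)^d) * (‖f‖ * (2*π)^d) := mul_le_mul_of_nonneg_left hb (by positivity)
    _ = ‖f‖ := by
      rw [one_div, mul_comm ‖f‖ ((2*π)^d), inv_mul_cancel_left₀ (by positivity)]

end TE
namespace TE
open Topology
variable {d : ℕ}

lemma timeAvg_sub (η : Fin d → ℝ) (f g : C(T (d := d), ℂ)) (L : ℝ) :
    timeAvg η (f - g) L = timeAvg η f L - timeAvg η g L := by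
  simp only [timeAvg, ContinuousMap.sub_apply]
  rw [intervalIntegral.integral_sub (intInt η f _ _) (intInt η g _ _), smul_sub]

lemma spaceAvg_sub (f g : C(T (d := d), ℂ)) :
    spaceAvg (f - g) = spaceAvg f - spaceAvg g := by
  simp only [spaceAvg, ContinuousMap.sub_apply]
  rw [integral_sub (intOn f) (intOn g), smul_sub]

lemma good_all (η : Fin d → ℝ) (hind : LinearIndependent ℚ η) (f : C(T (d := d), ℂ)) :
    Good η f := by
  have htop : f ∈ (monoAlg d).topologicalClosure := by
    rw [monoAlg_dense d]; trivial
  have h2 : f ∈ closure ((monoAlg d : Set C(T (d := d), ℂ))) := htop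
  rw [Good, Metric.tendsto_nhds]
  intro ε hε
  obtain ⟨p, hpA, hpd⟩ := Metric.mem_closure_iff.mp h2 (ε/4) (by positivity)
  have hgp : Good η p := good_span η hind p hpA
  have h3 := Metric.tendsto_nhds.mp hgp (ε/4) (by positivity)
  filter_upwards [h3, eventually_gt_atTop (0:ℝ)] with L h4 hL
  have key1 : dist (timeAvg η f L) (timeAvg η p L) ≤ dist f p := by
    rw [dist_eq_norm, ← timeAvg_sub, dist_eq_norm]
    exact timeAvg_norm_le η (f - p) hL
  have key2 : dist (spaceAvg p) (spaceAvg f) ≤ dist f p := by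
    rw [dist_eq_norm, ← spaceAvg_sub, dist_eq_norm]
    calc ‖spaceAvg (p - f)‖ ≤ ‖p - f‖ := spaceAvg_norm_le _
      _ = ‖f - p‖ := norm_sub_rev _ _
  have htri := dist_triangle4 (timeAvg η f L) (timeAvg η p L) (spaceAvg p) (spaceAvg f)
  linarith [key1, key2, h4, hpd, htri]

end TE

/-- Ergodic averaging along a dense torus line: if `g` is continuous on the `d`-torus and the
frequencies `η₁,…,η_d > 0` are linearly independent over `ℚ`, then the time averages of
`g ∘ ℓ_η` converge to the space average of `g`. -/
theorem torus_line_ergodic_average (d : ℕ) (hd : 1 ≤ d)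
    (g : (Fin d → ℂ) → ℂ)
    (hg : ContinuousOn g {z : Fin d → ℂ | ∀ j, ‖z j‖ = 1})
    (η : Fin d → ℝ) (hη : ∀ j, 0 < η j) (hind : LinearIndependent ℚ η) :
    Tendsto (fun L : ℝ => (1 / (2 * L) : ℝ) •
        ∫ ω in (-L)..L, g (fun j => Complex.exp ((η j : ℂ) * (ω : ℂ) * Complex.I)))
      atTop
      (nhds ((1 / (2 * π) ^ d : ℝ) •
        ∫ θ : Fin d → ℝ in Set.univ.pi (fun _ => Set.Ioc (0 : ℝ) (2 * π)),
          g (fun j => Complex.exp ((θ j : ℂ) * Complex.I)))) := by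
  exact TE.good_all η hind ⟨(TE.T d).restrict g, hg.restrict⟩
end

section
/- Let η ∈ ℝ^d have strictly positive entries and let D be the dimension over ℚ of the rational span of η₁,...,η_d. Then there exist q ∈ ℝ^D with strictly positive entries and multi-indices α₁,...,α_d ∈ ℤ_+^D such that η_ν = ⟨α_ν, q⟩ for every 1 ≤ ν ≤ d. -/
open Finset


private lemma aux_basis_repr (d : ℕ) (hd : 1 ≤ d)
    (η : Fin d → ℝ) (hη : ∀ j, 0 < η j)
    (D : ℕ) (hD : D = Module.finrank ℚ (Submodule.span ℚ (Set.range η))) :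
    ∃ e : Fin D → ℝ, (∀ k, 0 < e k) ∧
      ∃ c : Fin d → Fin D → ℚ, ∀ j, η j = ∑ i, (c j i : ℝ) * e i := by
  obtain ⟨b, hbs, hspan, hli⟩ := exists_linearIndependent ℚ (Set.range η)
  have hbfin : b.Finite := (Set.finite_range η).subset hbs
  haveI : Fintype b := hbfin.fintype
  have hb : Module.Basis b ℚ (Submodule.span ℚ (Set.range η)) := by
    have := Module.Basis.span hli
    rwa [Subtype.range_coe, hspan] at this
  have hcard : Fintype.card b = D := by
    rw [hD, Module.finrank_eq_card_basis hb]
  let φ : Fin D ≃ b := (Fintype.equivFinOfCardEq hcard).symm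
  refine ⟨fun k => (φ k : ℝ), ?_, ?_⟩
  · intro k
    have : ((φ k : ℝ)) ∈ Set.range η := hbs (φ k).2
    obtain ⟨j, hj⟩ := this
    simpa [← hj] using hη j
  · have hrange : Set.range (fun k => ((φ k : b) : ℝ)) = b := by
      ext x
      constructor
      · rintro ⟨k, rfl⟩; exact (φ k).2
      · intro hx; exact ⟨φ.symm ⟨x, hx⟩, by simp⟩
    have key : ∀ j, η j ∈ Submodule.span ℚ (Set.range (fun k => ((φ k : b) : ℝ))) := by
      intro j
      rw [hrange, hspan]
      exact Submodule.subset_span (Set.mem_range_self j)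
    have := fun j => (Submodule.mem_span_range_iff_exists_fun ℚ).mp (key j)
    choose c hc using this
    refine ⟨c, fun j => ?_⟩
    rw [← hc j]
    norm_num [Rat.smul_def]


private lemma aux_positive_combination (d D : ℕ) (hd : 1 ≤ d)
    (η : Fin d → ℝ) (hη : ∀ j, 0 < η j)
    (e : Fin D → ℝ) (he : ∀ k, 0 < e k)
    (c : Fin d → Fin D → ℚ) (hc : ∀ j, η j = ∑ i, (c j i : ℝ) * e i) :
    ∃ q : Fin D → ℝ, (∀ k, 0 < q k) ∧
      ∃ α : Fin d → Fin D → ℕ, ∀ j : Fin d, η j = ∑ k, (α j k : ℝ) * q k := by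
  haveI : NeZero d := ⟨by omega⟩
  -- bound on coefficients
  set B : ℚ := 1 + ∑ j, ∑ k, |c j k| with hB_def
  have hB1 : 1 ≤ B := le_add_of_nonneg_right (by positivity)
  have hB0 : 0 < B := lt_of_lt_of_le one_pos hB1
  have hcB : ∀ j k, |c j k| ≤ B := by
    intro j k
    have h1 : |c j k| ≤ ∑ k, |c j k| :=
      Finset.single_le_sum (f := fun i => |c j i|) (fun i _ => abs_nonneg _) (mem_univ k)
    have h2 : (∑ k, |c j k|) ≤ ∑ j, ∑ k, |c j k| :=
      Finset.single_le_sum (f := fun j => ∑ k, |c j k|)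
        (fun i _ => Finset.sum_nonneg fun _ _ => abs_nonneg _) (mem_univ j)
    linarith
  -- minimum of η
  obtain ⟨j₀⟩ : Nonempty (Fin d) := inferInstance
  set m : ℝ := Finset.univ.inf' ⟨j₀, mem_univ j₀⟩ η with hm_def
  have hm0 : 0 < m := by
    rw [hm_def]
    exact (Finset.lt_inf'_iff _).mpr fun j _ => hη j
  have hmle : ∀ j, m ≤ η j := fun j => Finset.inf'_le _ (mem_univ j)
  -- choose small rational ε
  obtain ⟨ε, hε0, hεm⟩ : ∃ ε : ℚ, 0 < ε ∧ (ε : ℝ) < m / B := by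
    obtain ⟨ε, h1, h2⟩ := exists_rat_btwn (show (0:ℝ) < m / B by positivity)
    exact ⟨ε, by exact_mod_cast h1, h2⟩
  have hεB : (ε : ℝ) * B < m := by
    rw [← lt_div_iff₀ (by exact_mod_cast hB0)]
    exact hεm
  have hkey : ∀ j k, 0 < η j + (ε : ℝ) * (c j k : ℝ) := by
    intro j k
    have h1 : |(ε:ℝ) * (c j k : ℝ)| ≤ (ε:ℝ) * B := by
      rw [abs_mul, abs_of_pos (by exact_mod_cast hε0)]
      have : |(c j k : ℝ)| ≤ (B : ℝ) := by exact_mod_cast hcB j k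
      exact mul_le_mul_of_nonneg_left this (by positivity)
    have := neg_abs_le ((ε:ℝ) * (c j k : ℝ))
    have := hmle j
    linarith
  -- the open set of good r's
  set U : Set (Fin D → ℝ) :=
    (⋂ j, ⋂ k, {r : Fin D → ℝ | 0 < (∑ i, (c j i : ℝ) * r i) + (ε:ℝ) * (c j k : ℝ)}) ∩
    (({r : Fin D → ℝ | 0 < (ε:ℝ) + ∑ i, r i}) ∩
      (⋂ k, {r : Fin D → ℝ | (∑ i, e i) * r k < e k * ((ε:ℝ) + ∑ i, r i)})) with hU_def
  have hcont : ∀ (a : Fin D → ℝ), Continuous (fun r : Fin D → ℝ => ∑ i, a i * r i) :=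
    fun a => continuous_finset_sum _ (fun i _ => continuous_const.mul (continuous_apply i))
  have hsum : Continuous (fun r : Fin D → ℝ => ∑ i, r i) :=
    continuous_finset_sum _ (fun i _ => continuous_apply i)
  have hUopen : IsOpen U := by
    refine IsOpen.inter ?_ (IsOpen.inter ?_ ?_)
    · exact isOpen_iInter_of_finite fun j => isOpen_iInter_of_finite fun k =>
        isOpen_lt continuous_const ((hcont _).add continuous_const)
    · exact isOpen_lt continuous_const (continuous_const.add hsum)
    · exact isOpen_iInter_of_finite fun k =>
        isOpen_lt (continuous_const.mul (continuous_apply k))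
          (continuous_const.mul (continuous_const.add hsum))
  have heU : e ∈ U := by
    refine ⟨Set.mem_iInter.2 fun j => Set.mem_iInter.2 fun k => ?_, ?_, Set.mem_iInter.2 fun k => ?_⟩
    · show 0 < (∑ i, (c j i : ℝ) * e i) + (ε:ℝ) * (c j k : ℝ)
      rw [← hc j]; exact hkey j k
    · show 0 < (ε:ℝ) + ∑ i, e i
      have : (0:ℝ) ≤ ∑ i, e i := Finset.sum_nonneg fun i _ => (he i).le
      have : (0:ℝ) < (ε:ℝ) := by exact_mod_cast hε0
      linarith
    · show (∑ i, e i) * e k < e k * ((ε:ℝ) + ∑ i, e i)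
      have h1 := he k
      have h2 : (0:ℝ) < (ε:ℝ) := by exact_mod_cast hε0
      nlinarith
  -- find a rational point in U
  have hdense : Dense (Set.pi Set.univ (fun _ : Fin D => Set.range ((↑) : ℚ → ℝ))) :=
    dense_pi _ fun _ _ => Rat.denseRange_cast
  obtain ⟨r', hr'U, hr'Q⟩ := hdense.inter_open_nonempty U hUopen ⟨e, heU⟩
  have : ∀ i, ∃ q : ℚ, (q : ℝ) = r' i := fun i => (hr'Q i (Set.mem_univ i))
  choose r hr using this
  set rr : Fin D → ℝ := fun i => (r i : ℝ) with hrr_def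
  have hrr : rr = r' := funext hr
  rw [← hrr] at hr'U
  obtain ⟨hU1, hU2, hU3⟩ := hr'U
  simp only [Set.mem_iInter, Set.mem_setOf_eq] at hU1 hU2 hU3
  -- the coefficients
  set A : Fin d → Fin D → ℚ := fun j k => (∑ i, c j i * r i) + ε * c j k with hA_def
  have hAcast : ∀ j k, (A j k : ℝ) = (∑ i, (c j i : ℝ) * rr i) + (ε:ℝ) * (c j k : ℝ) := by
    intro j k; rw [hA_def]; push_cast; rfl
  have hApos : ∀ j k, 0 < A j k := by
    intro j k
    have := hU1 j k
    rw [← hAcast j k] at this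
    exact_mod_cast this
  -- q0
  have hεR : (0:ℝ) < (ε:ℝ) := by exact_mod_cast hε0
  set S : ℝ := (∑ i, e i) / ((ε:ℝ) + ∑ i, rr i) with hS_def
  set q0 : Fin D → ℝ := fun k => (e k - S * rr k) / ε with hq0_def
  have hq0pos : ∀ k, 0 < q0 k := by
    intro k
    have h1 : S * rr k < e k := by
      rw [hS_def, div_mul_eq_mul_div, div_lt_iff₀ hU2]
      exact hU3 k
    rw [hq0_def]
    have : 0 < e k - S * rr k := by linarith
    positivity
  have hSmul : S * ((ε:ℝ) + ∑ i, rr i) = ∑ i, e i := div_mul_cancel₀ _ (ne_of_gt hU2)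
  have hSq : ∑ k, q0 k = S := by
    have h1 : ∑ k, q0 k = ((∑ k, e k) - S * ∑ k, rr k) / ε := by
      rw [hq0_def, ← Finset.sum_div, Finset.sum_sub_distrib, ← Finset.mul_sum]
    rw [h1]
    field_simp
    linarith [hSmul]
  have he_eq : ∀ i, e i = S * rr i + (ε:ℝ) * q0 i := by
    intro i
    rw [hq0_def]
    field_simp
    ring
  -- main identity with rational coefficients
  have hmain : ∀ j, η j = ∑ k, (A j k : ℝ) * q0 k := by
    intro j
    have lhs : η j = S * (∑ i, (c j i : ℝ) * rr i) + (ε:ℝ) * ∑ i, (c j i : ℝ) * q0 i := by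
      rw [hc j]
      rw [Finset.mul_sum, Finset.mul_sum, ← Finset.sum_add_distrib]
      congr 1; ext i
      rw [he_eq i]; ring
    have rhs : ∑ k, (A j k : ℝ) * q0 k
        = (∑ i, (c j i : ℝ) * rr i) * (∑ k, q0 k) + (ε:ℝ) * ∑ k, (c j k : ℝ) * q0 k := by
      simp_rw [hAcast, add_mul]
      rw [Finset.sum_add_distrib, Finset.mul_sum, Finset.mul_sum]
      congr 1
      apply Finset.sum_congr rfl; intro k _; ring
    rw [lhs, rhs, hSq]
    ring
  -- clear denominators
  set N : ℕ := ∏ j, ∏ k, (A j k).den with hN_def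
  have hNpos : 0 < N := Finset.prod_pos fun j _ => Finset.prod_pos fun k _ => (A j k).pos
  have hdvd : ∀ j k, (A j k).den ∣ N := by
    intro j k
    refine dvd_trans (Finset.dvd_prod_of_mem (fun k => (A j k).den) (mem_univ k)) ?_
    exact Finset.dvd_prod_of_mem (fun j => ∏ k, (A j k).den) (mem_univ j)
  have hnat : ∀ j k, ∃ n : ℕ, (n : ℚ) = A j k * N := by
    intro j k
    obtain ⟨mm, hmm⟩ := hdvd j k
    refine ⟨(A j k).num.toNat * mm, ?_⟩
    have hnum : (0:ℤ) < (A j k).num := Rat.num_pos.mpr (hApos j k)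
    have h1 : ((A j k).num.toNat : ℤ) = (A j k).num := Int.toNat_of_nonneg hnum.le
    push_cast [hmm]
    rw [← mul_assoc, Rat.mul_den_eq_num]
    congr 1
    exact_mod_cast h1
  choose α hα using hnat
  have hNR : (0:ℝ) < (N:ℝ) := by exact_mod_cast hNpos
  refine ⟨fun k => q0 k / N, fun k => div_pos (hq0pos k) hNR, α, fun j => ?_⟩
  rw [hmain j]
  apply Finset.sum_congr rfl
  intro k _
  have h1 : ((α j k : ℕ) : ℝ) = (A j k : ℝ) * N := by
    exact_mod_cast congrArg (fun x : ℚ => (x : ℝ)) (hα j k)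
  rw [h1]
  field_simp

/-- Positive reals `η₁,…,η_d` can be expressed as nonnegative-integer combinations of `D`
positive reals, where `D` is the dimension over `ℚ` of their rational span. -/
theorem positive_integer_combination (d : ℕ) (hd : 1 ≤ d)
    (η : Fin d → ℝ) (hη : ∀ j, 0 < η j)
    (D : ℕ) (hD : D = Module.finrank ℚ (Submodule.span ℚ (Set.range η))) :
    ∃ q : Fin D → ℝ, (∀ k, 0 < q k) ∧
      ∃ α : Fin d → Fin D → ℕ, ∀ j : Fin d, η j = ∑ k, (α j k : ℝ) * q k := by
  obtain ⟨e, he, c, hc⟩ := aux_basis_repr d hd η hη D hD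
  exact aux_positive_combination d D hd η hη e he c hc
end
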